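/- arXiv:2203.00785 — 7 statements merged into one kernel-verified Lean document; each statement's English description precedes it below -/
import Mathlib

section
/- Let (A_r)_{r>0} be a family of measurable subsets of M with μ(A_r) > 0 for all sufficiently small r > 0 and μ(A_r) → 0 as r → 0⁺. Then for every compact set K ⊆ [0,∞), limsup_{r→0⁺} ∫ 𝒩_{A_r}(K) dμ ≤ Leb(K), where Leb denotes Lebesgue measure on [0,∞). -/
open MeasureTheory Filter Set Topology
open scoped ENNReal NNReal

/-- Let `(A r)_{r>0}` be a family of measurable subsets of `M` with
`μ (A r) > 0` for all sufficiently small `r > 0` and `μ (A r) → 0` as `r → 0⁺`.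
Then for every compact `K ⊆ [0,∞)`,
`limsup_{r→0⁺} ∫ 𝒩_{A r}(K) dμ ≤ Leb K`, where
`𝒩_A(K) x = ∑_{i ∈ ℕ, i·μ(A) ∈ K} 1_A (f^[i] x)`. -/
theorem stmt0 {M : Type*} [MeasurableSpace M] (μ : Measure M) [IsProbabilityMeasure μ]
    (f : M → M) (hf : MeasurePreserving f μ μ)
    (A : ℝ → Set M) (hAmeas : ∀ r, MeasurableSet (A r))
    (hApos : ∀ᶠ r in 𝓝[>] (0 : ℝ), 0 < μ (A r))
    (hA0 : Tendsto (fun r => μ (A r)) (𝓝[>] (0 : ℝ)) (𝓝 0))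
    (K : Set ℝ) (hK : IsCompact K) (hKsub : K ⊆ Ici (0 : ℝ)) :
    limsup (fun r => ∫⁻ x, ∑' i : ℕ,
        K.indicator (fun _ => (A r).indicator (1 : M → ℝ≥0∞) (f^[i] x))
          ((i : ℝ) * (μ (A r)).toReal) ∂μ)
      (𝓝[>] (0 : ℝ)) ≤ volume K := by
  have key : ∀ ε : ℝ, 0 < ε → ∀ᶠ r in 𝓝[>] (0:ℝ),
      (∫⁻ x, ∑' i : ℕ, K.indicator (fun _ => (A r).indicator (1 : M → ℝ≥0∞) (f^[i] x))
          ((i : ℝ) * (μ (A r)).toReal) ∂μ) ≤ volume (Metric.cthickening ε K) := by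
    intro ε hε
    classical
    have h1 : ∀ᶠ r in 𝓝[>] (0:ℝ), μ (A r) < ENNReal.ofReal ε :=
      hA0.eventually (gt_mem_nhds (by simpa using ENNReal.ofReal_pos.mpr hε))
    filter_upwards [hApos, h1] with r hpos hlt
    set a : ℝ := (μ (A r)).toReal with ha
    have hane : μ (A r) ≠ ∞ := measure_ne_top μ _
    have hapos : 0 < a := ENNReal.toReal_pos hpos.ne' hane
    have hale : a ≤ ε := ENNReal.toReal_le_of_le_ofReal hε.le hlt.le
    have hmeas : ∀ i : ℕ, Measurable fun x =>
        K.indicator (fun _ => (A r).indicator (1 : M → ℝ≥0∞) (f^[i] x)) ((i:ℝ) * a) := by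
      intro i
      by_cases h : (i:ℝ) * a ∈ K
      · simpa [Set.indicator_of_mem h, Function.comp_def] using
          ((measurable_one.indicator (hAmeas r)).comp (hf.iterate i).measurable)
      · simp [Set.indicator_of_notMem h]
    rw [lintegral_tsum (fun i => (hmeas i).aemeasurable)]
    have hint : ∀ i : ℕ, ∫⁻ x, K.indicator (fun _ => (A r).indicator (1:M→ℝ≥0∞) (f^[i] x))
        ((i:ℝ)*a) ∂μ = K.indicator (fun _ => μ (A r)) ((i:ℝ)*a) := by
      intro i
      by_cases h : (i:ℝ)*a ∈ K
      · simp only [Set.indicator_of_mem h]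
        rw [(hf.iterate i).lintegral_comp (measurable_one.indicator (hAmeas r))]
        exact lintegral_indicator_one (hAmeas r)
      · simp [Set.indicator_of_notMem h]
    simp_rw [hint]
    set B : ℕ → Set ℝ := fun i =>
      if (i:ℝ)*a ∈ K then Ico ((i:ℝ)*a) ((i:ℝ)*a + a) else ∅ with hB
    have hvol : ∀ i, volume (B i) = K.indicator (fun _ => μ (A r)) ((i:ℝ)*a) := by
      intro i
      by_cases h : (i:ℝ)*a ∈ K
      · simp [hB, h, Real.volume_Ico, Set.indicator_of_mem h, ENNReal.ofReal_toReal hane]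
        rw [ha, ENNReal.ofReal_toReal hane]
      · simp [hB, h, Set.indicator_of_notMem h]
    have hBmeas : ∀ i, MeasurableSet (B i) := by
      intro i
      by_cases h : (i:ℝ)*a ∈ K <;> simp [hB, h, measurableSet_Ico]
    have hdisj : Pairwise (Function.onFun Disjoint B) := by
      intro i j hij
      simp only [Function.onFun, hB]
      by_cases hi : (i:ℝ)*a ∈ K
      swap
      · simp [hi]
      by_cases hj : (j:ℝ)*a ∈ K
      swap
      · simp [hj]
      simp only [hi, hj, if_true]
      rw [Set.Ico_disjoint_Ico]
      rcases lt_or_gt_of_ne hij with h | h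
      · have : (i:ℝ)*a + a ≤ (j:ℝ)*a := by
          have : ((i:ℕ):ℝ) + 1 ≤ (j:ℕ) := by exact_mod_cast h
          nlinarith
        calc ((i:ℝ)*a + a) ⊓ ((j:ℝ)*a + a) ≤ (i:ℝ)*a + a := inf_le_left
          _ ≤ (j:ℝ)*a := this
          _ ≤ ((i:ℝ)*a) ⊔ ((j:ℝ)*a) := le_sup_right
      · have : (j:ℝ)*a + a ≤ (i:ℝ)*a := by
          have : ((j:ℕ):ℝ) + 1 ≤ (i:ℕ) := by exact_mod_cast h
          nlinarith
        calc ((i:ℝ)*a + a) ⊓ ((j:ℝ)*a + a) ≤ (j:ℝ)*a + a := inf_le_right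
          _ ≤ (i:ℝ)*a := this
          _ ≤ ((i:ℝ)*a) ⊔ ((j:ℝ)*a) := le_sup_left
    have hsub : (⋃ i, B i) ⊆ Metric.cthickening ε K := by
      rintro x hx
      simp only [Set.mem_iUnion] at hx
      obtain ⟨i, hx⟩ := hx
      by_cases h : (i:ℝ)*a ∈ K
      · simp only [hB, h, if_true, Set.mem_Ico] at hx
        refine Metric.mem_cthickening_of_dist_le x ((i:ℝ)*a) ε K h ?_
        rw [Real.dist_eq, abs_of_nonneg (by linarith [hx.1])]
        linarith [hx.2]
      · simp [hB, h] at hx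
    calc ∑' i : ℕ, K.indicator (fun _ => μ (A r)) ((i:ℝ)*a)
        = ∑' i : ℕ, volume (B i) := (tsum_congr hvol).symm
      _ = volume (⋃ i, B i) := (measure_iUnion hdisj hBmeas).symm
      _ ≤ volume (Metric.cthickening ε K) := measure_mono hsub
  have T : Tendsto (fun ε => volume (Metric.cthickening ε K)) (𝓝[>] (0:ℝ))
      (𝓝 (volume K)) :=
    (tendsto_measure_cthickening_of_isCompact hK).mono_left nhdsWithin_le_nhds
  refine ge_of_tendsto T ?_
  filter_upwards [self_mem_nhdsWithin] with ε hε
  exact limsup_le_of_le (by isBoundedDefault) (key ε hε)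
end

section
/- Let (Q_r)_{r>0} and (S_r)_{r>0} be families of measurable subsets of M with S_r ⊆ Q_r, μ(Q_r) > 0 for all sufficiently small r > 0, μ(Q_r) → 0 and μ(Q_r ∖ S_r)/μ(Q_r) → 0 as r → 0⁺. Then for every finite collection of pairwise disjoint bounded intervals J_1, …, J_n ⊆ [0,∞), lim_{r→0⁺} [ μ({x ∈ M : f^j(x) ∉ S_r for every j ∈ ℕ with j·μ(S_r) ∈ ⋃_{i≤n} J_i}) − μ({x ∈ M : f^j(x) ∉ Q_r for every j ∈ ℕ with j·μ(Q_r) ∈ ⋃_{i≤n} J_i}) ] = 0. (Note μ(S_r) > 0 for small r, since μ(S_r) ≥ μ(Q_r)(1 − o(1)).) -/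
open MeasureTheory Filter Set Topology
open scoped ENNReal NNReal

private lemma count_aux {N : ℕ} {c u v : ℝ} (hc : 0 < c) (hu : 0 ≤ u) (huv : u ≤ v)
    (P : ℕ → Prop) [DecidablePred P] (hP : ∀ j, P j → (j : ℝ) * c ∈ Icc u v) :
    (((Finset.range N).filter P).card : ℝ) ≤ (v - u) / c + 1 := by
  rcases ((Finset.range N).filter P).eq_empty_or_nonempty with h | h
  · rw [h]
    have : (0:ℝ) ≤ (v - u)/c := div_nonneg (by linarith) hc.le
    simp only [Finset.card_empty, Nat.cast_zero]
    linarith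
  · set m := ⌈u / c⌉₊ with hm
    set k := ⌊v / c⌋₊ with hk
    have hsub : (Finset.range N).filter P ⊆ Finset.Icc m k := by
      intro j hj
      have hPj : P j := (Finset.mem_filter.mp hj).2
      obtain ⟨h1, h2⟩ := hP j hPj
      rw [Finset.mem_Icc]
      exact ⟨Nat.ceil_le.mpr ((div_le_iff₀ hc).mpr h1), Nat.le_floor ((le_div_iff₀ hc).mpr h2)⟩
    obtain ⟨j, hj⟩ := h
    have hmk : m ≤ k := le_trans (Finset.mem_Icc.mp (hsub hj)).1 (Finset.mem_Icc.mp (hsub hj)).2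
    have hcard : ((Finset.range N).filter P).card ≤ k + 1 - m := by
      simpa [Nat.card_Icc] using Finset.card_le_card hsub
    have h1 : u / c ≤ (m:ℝ) := Nat.le_ceil _
    have h2 : (k:ℝ) ≤ v / c := Nat.floor_le (div_nonneg (le_trans hu huv) hc.le)
    calc (((Finset.range N).filter P).card : ℝ) ≤ ((k + 1 - m : ℕ) : ℝ) := by exact_mod_cast hcard
      _ = (k:ℝ) + 1 - m := by rw [Nat.cast_sub (by omega)]; push_cast; ring
      _ ≤ v/c + 1 - u/c := by linarith
      _ = (v - u)/c + 1 := by rw [sub_div]; ring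

private lemma acount {N : ℕ} {a C : ℝ} (ha : 0 < a) (hC : 0 ≤ C) {T : Set ℝ}
    (hTC : T ⊆ Icc 0 C) (P : ℕ → Prop) [DecidablePred P]
    (hP : ∀ j, P j → (j:ℝ) * a ∈ T) :
    (((Finset.range N).filter P).card : ℝ) ≤ C / a + 1 := by
  have := count_aux (N := N) ha le_rfl hC P (fun j hj => hTC (hP j hj))
  simpa using this

private lemma bcount_lo {N : ℕ} {s a C : ℝ} (hs : 0 < s) (hsa : s ≤ a) (hC : 0 < C)
    {T U : Set ℝ} (hTU : T ⊆ U) (hT : T.OrdConnected) (hTC : T ⊆ Icc 0 C)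
    (P : ℕ → Prop) [DecidablePred P]
    (hP : ∀ j, P j → (j:ℝ) * a ∈ T ∧ (j:ℝ) * s ∉ U) :
    (((Finset.range N).filter P).card : ℝ) ≤ C * (a - s) / (a * s) + 1 := by
  have ha : 0 < a := lt_of_lt_of_le hs hsa
  rcases T.eq_empty_or_nonempty with hTe | hTne
  · have hemp : (Finset.range N).filter P = ∅ :=
      Finset.filter_eq_empty_iff.mpr (fun j _ hPj => by
        have := (hP j hPj).1; rw [hTe] at this; exact this)
    rw [hemp]
    have : (0:ℝ) ≤ C * (a - s) / (a * s) :=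
      div_nonneg (mul_nonneg hC.le (by linarith)) (by positivity)
    simp only [Finset.card_empty, Nat.cast_zero]
    linarith
  · set α := sInf T with hαdef
    have hbdd : BddBelow T := ⟨0, fun t ht => (hTC ht).1⟩
    have hα0 : 0 ≤ α := le_csInf hTne (fun t ht => (hTC ht).1)
    have hαC : α ≤ C := le_trans (csInf_le hbdd hTne.choose_spec) (hTC hTne.choose_spec).2
    have key : ∀ j, P j → (j:ℝ) * 1 ∈ Icc (α/a) (α/s) := by
      intro j hj
      obtain ⟨hja, hjs⟩ := hP j hj
      have hjs_le : (j:ℝ)*s ≤ (j:ℝ)*a :=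
        mul_le_mul_of_nonneg_left hsa (Nat.cast_nonneg j)
      have h1 : (j:ℝ)*s ≤ α := by
        refine le_csInf hTne (fun t ht => ?_)
        by_contra hlt
        push_neg at hlt
        exact hjs (hTU (hT.out ht hja ⟨hlt.le, hjs_le⟩))
      have h2 : α ≤ (j:ℝ)*a := csInf_le hbdd hja
      rw [mul_one]
      exact ⟨(div_le_iff₀ ha).mpr (by linarith), (le_div_iff₀ hs).mpr h1⟩
    have huv : α/a ≤ α/s := by
      rw [div_le_div_iff₀ ha hs]
      nlinarith
    have hc := count_aux (N := N) one_pos (by positivity) huv P key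
    have heq : (α/s - α/a)/1 = α * (a - s)/(a*s) := by
      field_simp
    rw [heq] at hc
    have h3 : α*(a-s)/(a*s) ≤ C*(a-s)/(a*s) := by
      have : α*(a-s) ≤ C*(a-s) := mul_le_mul_of_nonneg_right hαC (by linarith)
      exact (div_le_div_iff_of_pos_right (by positivity)).mpr this
    linarith

private lemma bcount_hi {N : ℕ} {s a C : ℝ} (hs : 0 < s) (hsa : s ≤ a) (hC : 0 < C)
    {T U : Set ℝ} (hTU : T ⊆ U) (hT : T.OrdConnected) (hTC : T ⊆ Icc 0 C)
    (P : ℕ → Prop) [DecidablePred P]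
    (hP : ∀ j, P j → (j:ℝ) * s ∈ T ∧ (j:ℝ) * a ∉ U) :
    (((Finset.range N).filter P).card : ℝ) ≤ C * (a - s) / (a * s) + 1 := by
  have ha : 0 < a := lt_of_lt_of_le hs hsa
  rcases T.eq_empty_or_nonempty with hTe | hTne
  · have hemp : (Finset.range N).filter P = ∅ :=
      Finset.filter_eq_empty_iff.mpr (fun j _ hPj => by
        have := (hP j hPj).1; rw [hTe] at this; exact this)
    rw [hemp]
    have : (0:ℝ) ≤ C * (a - s) / (a * s) :=
      div_nonneg (mul_nonneg hC.le (by linarith)) (by positivity)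
    simp only [Finset.card_empty, Nat.cast_zero]
    linarith
  · set β := sSup T with hβdef
    have hbdd : BddAbove T := ⟨C, fun t ht => (hTC ht).2⟩
    have hβ0 : 0 ≤ β := le_trans (hTC hTne.choose_spec).1 (le_csSup hbdd hTne.choose_spec)
    have hβC : β ≤ C := csSup_le hTne (fun t ht => (hTC ht).2)
    have key : ∀ j, P j → (j:ℝ) * 1 ∈ Icc (β/a) (β/s) := by
      intro j hj
      obtain ⟨hjs, hja⟩ := hP j hj
      have hjs_le : (j:ℝ)*s ≤ (j:ℝ)*a :=
        mul_le_mul_of_nonneg_left hsa (Nat.cast_nonneg j)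
      have h1 : β ≤ (j:ℝ)*a := by
        refine csSup_le hTne (fun t ht => ?_)
        by_contra hlt
        push_neg at hlt
        exact hja (hTU (hT.out hjs ht ⟨hjs_le, hlt.le⟩))
      have h2 : (j:ℝ)*s ≤ β := le_csSup hbdd hjs
      rw [mul_one]
      exact ⟨(div_le_iff₀ ha).mpr (by linarith), (le_div_iff₀ hs).mpr h2⟩
    have huv : β/a ≤ β/s := by
      rw [div_le_div_iff₀ ha hs]
      nlinarith
    have hc := count_aux (N := N) one_pos (by positivity) huv P key
    have heq : (β/s - β/a)/1 = β * (a - s)/(a*s) := by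
      field_simp
    rw [heq] at hc
    have h3 : β*(a-s)/(a*s) ≤ C*(a-s)/(a*s) := by
      have : β*(a-s) ≤ C*(a-s) := mul_le_mul_of_nonneg_right hβC (by linarith)
      exact (div_le_div_iff_of_pos_right (by positivity)).mpr this
    linarith

private lemma sum_count {N n : ℕ} (P : ℕ → Prop) (Pi : Fin n → ℕ → Prop)
    [DecidablePred P] [∀ i, DecidablePred (Pi i)]
    (h : ∀ j, P j → ∃ i, Pi i j) {B : ℝ}
    (hB : ∀ i, (((Finset.range N).filter (Pi i)).card : ℝ) ≤ B) :
    (((Finset.range N).filter P).card : ℝ) ≤ n * B := by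
  have hsub : (Finset.range N).filter P ⊆
      Finset.univ.biUnion (fun i => (Finset.range N).filter (Pi i)) := by
    intro j hj
    rw [Finset.mem_filter] at hj
    obtain ⟨i, hi⟩ := h j hj.2
    exact Finset.mem_biUnion.mpr ⟨i, Finset.mem_univ i, Finset.mem_filter.mpr ⟨hj.1, hi⟩⟩
  calc (((Finset.range N).filter P).card : ℝ)
      ≤ ((Finset.univ.biUnion (fun i => (Finset.range N).filter (Pi i))).card : ℝ) := by
        exact_mod_cast Finset.card_le_card hsub
    _ ≤ ∑ i : Fin n, (((Finset.range N).filter (Pi i)).card : ℝ) := by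
        exact_mod_cast Finset.card_biUnion_le
    _ ≤ ∑ _i : Fin n, B := Finset.sum_le_sum (fun i _ => hB i)
    _ = n * B := by rw [Finset.sum_const, Finset.card_univ, Fintype.card_fin, nsmul_eq_mul]

private lemma union_bound {M : Type*} [MeasurableSpace M] (μ : Measure M)
    (f : M → M) (hf : MeasurePreserving f μ μ) (F : Finset ℕ) (T : Set M)
    (hT : MeasurableSet T) :
    μ (⋃ j ∈ F, f^[j] ⁻¹' T) ≤ (F.card : ℝ≥0∞) * μ T := by
  calc μ (⋃ j ∈ F, f^[j] ⁻¹' T) ≤ ∑ j ∈ F, μ (f^[j] ⁻¹' T) :=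
        measure_biUnion_finset_le F _
    _ = ∑ _j ∈ F, μ T := Finset.sum_congr rfl
        (fun j _ => (hf.iterate j).measure_preimage hT.nullMeasurableSet)
    _ = (F.card : ℝ≥0∞) * μ T := by rw [Finset.sum_const, nsmul_eq_mul]

private lemma key {M : Type*} [MeasurableSpace M] (μ : Measure M) [IsProbabilityMeasure μ]
    (f : M → M) (hf : MeasurePreserving f μ μ)
    (QQ SS : Set M) (hQm : MeasurableSet QQ) (hSm : MeasurableSet SS) (hsub : SS ⊆ QQ)
    (n : ℕ) (J : Fin n → Set ℝ) (hJint : ∀ i, (J i).OrdConnected)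
    {C : ℝ} (hC : 0 < C) (hJC : ∀ i, J i ⊆ Icc 0 C)
    (hpos : 0 < μ QQ) (hhalf : μ (QQ \ SS) / μ QQ < 1/2) :
    |(μ {x | ∀ j : ℕ, (j : ℝ) * (μ SS).toReal ∈ ⋃ i, J i → f^[j] x ∉ SS}).toReal
      - (μ {x | ∀ j : ℕ, (j : ℝ) * (μ QQ).toReal ∈ ⋃ i, J i → f^[j] x ∉ QQ}).toReal|
    ≤ n * (3 * C * ((μ (QQ \ SS)).toReal / (μ QQ).toReal)
        + (μ QQ).toReal + (μ (QQ \ SS)).toReal) := by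
  classical
  set a := (μ QQ).toReal with ha_def
  set s := (μ SS).toReal with hs_def
  set d := (μ (QQ \ SS)).toReal with hd_def
  have hμQtop : μ QQ ≠ ⊤ := measure_ne_top μ QQ
  have ha : 0 < a := ENNReal.toReal_pos hpos.ne' hμQtop
  have hd0 : 0 ≤ d := ENNReal.toReal_nonneg
  have hQsum : μ SS + μ (QQ \ SS) = μ QQ := by
    have h := measure_inter_add_diff (μ := μ) QQ hSm
    rwa [Set.inter_eq_self_of_subset_right hsub] at h
  have hsd : s + d = a := by
    rw [ha_def, hs_def, hd_def,
      ← ENNReal.toReal_add (measure_ne_top μ _) (measure_ne_top μ _), hQsum]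
  have hd_lt : d < a/2 := by
    have h1 : μ (QQ \ SS) < 1/2 * μ QQ :=
      (ENNReal.div_lt_iff (Or.inl hpos.ne') (Or.inl hμQtop)).mp hhalf
    have h2 : d < (1/2 * μ QQ).toReal :=
      (ENNReal.toReal_lt_toReal (measure_ne_top μ _) (ENNReal.mul_ne_top (by norm_num) hμQtop)).mpr h1
    rw [ENNReal.toReal_mul] at h2
    norm_num at h2
    linarith
  have hspos : 0 < s := by linarith
  have hsa : s ≤ a := by linarith
  set U := ⋃ i, J i with hU_def
  have hJU : ∀ i, J i ⊆ U := fun i => subset_iUnion J i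
  have hUC : U ⊆ Icc 0 C := iUnion_subset hJC
  set N := ⌊2*C/a⌋₊ + 1 with hN_def
  have hNa : ∀ j : ℕ, (j:ℝ)*a ∈ U → j ∈ Finset.range N := by
    intro j hj
    have h1 : (j:ℝ)*a ≤ C := (hUC hj).2
    have h2 : (j:ℝ) ≤ 2*C/a := by
      rw [le_div_iff₀ ha]; nlinarith [hC.le]
    simp only [hN_def, Finset.mem_range, Nat.lt_succ_iff]
    exact Nat.le_floor h2
  have hNs : ∀ j : ℕ, (j:ℝ)*s ∈ U → j ∈ Finset.range N := by
    intro j hj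
    have h1 : (j:ℝ)*s ≤ C := (hUC hj).2
    have h2 : (j:ℝ) ≤ 2*C/a := by
      rw [le_div_iff₀ ha]
      nlinarith [Nat.cast_nonneg (α := ℝ) j]
    simp only [hN_def, Finset.mem_range, Nat.lt_succ_iff]
    exact Nat.le_floor h2
  set PQS := fun j : ℕ => ((j:ℝ)*a ∈ U ∧ (j:ℝ)*s ∈ U) with hPQS
  set PQ := fun j : ℕ => ((j:ℝ)*a ∈ U ∧ (j:ℝ)*s ∉ U) with hPQ
  set PS := fun j : ℕ => ((j:ℝ)*s ∈ U ∧ (j:ℝ)*a ∉ U) with hPS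
  set FQS := (Finset.range N).filter PQS with hFQS
  set FQ := (Finset.range N).filter PQ with hFQ
  set FS := (Finset.range N).filter PS with hFS
  set ES := {x | ∀ j : ℕ, (j:ℝ)*s ∈ U → f^[j] x ∉ SS} with hES
  set EQ := {x | ∀ j : ℕ, (j:ℝ)*a ∈ U → f^[j] x ∉ QQ} with hEQ
  -- inclusion 1
  have hincl1 : ES ⊆ EQ ∪ ((⋃ j ∈ FQS, f^[j] ⁻¹' (QQ \ SS)) ∪ ⋃ j ∈ FQ, f^[j] ⁻¹' QQ) := by
    intro x hx
    by_cases hxq : x ∈ EQ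
    · exact Or.inl hxq
    · right
      rw [hEQ, mem_setOf_eq] at hxq
      push_neg at hxq
      obtain ⟨j, hja, hmem⟩ := hxq
      by_cases hjs : (j:ℝ)*s ∈ U
      · exact Or.inl (mem_iUnion₂.mpr
          ⟨j, Finset.mem_filter.mpr ⟨hNa j hja, hja, hjs⟩, hmem, hx j hjs⟩)
      · exact Or.inr (mem_iUnion₂.mpr
          ⟨j, Finset.mem_filter.mpr ⟨hNa j hja, hja, hjs⟩, hmem⟩)
  have hincl2 : EQ ⊆ ES ∪ ⋃ j ∈ FS, f^[j] ⁻¹' SS := by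
    intro x hx
    by_cases hxs : x ∈ ES
    · exact Or.inl hxs
    · right
      rw [hES, mem_setOf_eq] at hxs
      push_neg at hxs
      obtain ⟨j, hjs, hmem⟩ := hxs
      have hja : (j:ℝ)*a ∉ U := fun h => hx j h (hsub hmem)
      exact mem_iUnion₂.mpr ⟨j, Finset.mem_filter.mpr ⟨hNs j hjs, hjs, hja⟩, hmem⟩
  -- measure bounds
  have hm1 : (μ ES).toReal ≤ (μ EQ).toReal + FQS.card * d + FQ.card * a := by
    have hEN : μ ES ≤ μ EQ + ((FQS.card : ℝ≥0∞) * μ (QQ \ SS) + (FQ.card : ℝ≥0∞) * μ QQ) :=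
      calc μ ES ≤ μ (EQ ∪ ((⋃ j ∈ FQS, f^[j] ⁻¹' (QQ \ SS)) ∪ ⋃ j ∈ FQ, f^[j] ⁻¹' QQ)) :=
            measure_mono hincl1
        _ ≤ μ EQ + μ ((⋃ j ∈ FQS, f^[j] ⁻¹' (QQ \ SS)) ∪ ⋃ j ∈ FQ, f^[j] ⁻¹' QQ) :=
            measure_union_le _ _
        _ ≤ μ EQ + (μ (⋃ j ∈ FQS, f^[j] ⁻¹' (QQ \ SS)) + μ (⋃ j ∈ FQ, f^[j] ⁻¹' QQ)) :=
            add_le_add_right (measure_union_le _ _) _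
        _ ≤ μ EQ + ((FQS.card : ℝ≥0∞) * μ (QQ \ SS) + (FQ.card : ℝ≥0∞) * μ QQ) :=
            add_le_add_right (add_le_add
              (union_bound μ f hf FQS (QQ \ SS) (hQm.diff hSm))
              (union_bound μ f hf FQ QQ hQm)) _
    have h2 := ENNReal.toReal_mono (by finiteness) hEN
    rwa [ENNReal.toReal_add (by finiteness) (by finiteness),
      ENNReal.toReal_add (by finiteness) (by finiteness),
      ENNReal.toReal_mul, ENNReal.toReal_mul, ENNReal.toReal_natCast,
      ENNReal.toReal_natCast, ← hd_def, ← ha_def, ← add_assoc] at h2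
  have hm2 : (μ EQ).toReal ≤ (μ ES).toReal + FS.card * s := by
    have hEN : μ EQ ≤ μ ES + (FS.card : ℝ≥0∞) * μ SS :=
      calc μ EQ ≤ μ (ES ∪ ⋃ j ∈ FS, f^[j] ⁻¹' SS) := measure_mono hincl2
        _ ≤ μ ES + μ (⋃ j ∈ FS, f^[j] ⁻¹' SS) := measure_union_le _ _
        _ ≤ μ ES + (FS.card : ℝ≥0∞) * μ SS :=
            add_le_add_right (union_bound μ f hf FS SS hSm) _
    have h2 := ENNReal.toReal_mono (by finiteness) hEN
    rwa [ENNReal.toReal_add (by finiteness) (by finiteness),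
      ENNReal.toReal_mul, ENNReal.toReal_natCast, ← hs_def] at h2
  -- card bounds
  have hb_qs : (FQS.card : ℝ) ≤ n * (C/a + 1) := by
    rw [hFQS]
    exact sum_count PQS (fun i j => (j:ℝ)*a ∈ J i)
      (fun j hj => mem_iUnion.mp hj.1)
      (fun i => acount ha hC.le (hJC i) _ (fun j hj => hj))
  have hb_q : (FQ.card : ℝ) ≤ n * (C*(a-s)/(a*s) + 1) := by
    rw [hFQ]
    exact sum_count PQ (fun i j => (j:ℝ)*a ∈ J i ∧ (j:ℝ)*s ∉ U)
      (fun j hj => (mem_iUnion.mp hj.1).imp (fun i hi => ⟨hi, hj.2⟩))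
      (fun i => bcount_lo hspos hsa hC (hJU i) (hJint i) (hJC i) _ (fun j hj => hj))
  have hb_s : (FS.card : ℝ) ≤ n * (C*(a-s)/(a*s) + 1) := by
    rw [hFS]
    exact sum_count PS (fun i j => (j:ℝ)*s ∈ J i ∧ (j:ℝ)*a ∉ U)
      (fun j hj => (mem_iUnion.mp hj.1).imp (fun i hi => ⟨hi, hj.2⟩))
      (fun i => bcount_hi hspos hsa hC (hJU i) (hJint i) (hJC i) _ (fun j hj => hj))
  -- algebra
  have hn0 : (0:ℝ) ≤ n := Nat.cast_nonneg n
  have hds : C*d/s ≤ 2*C*(d/a) := by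
    rw [show (2:ℝ)*C*(d/a) = 2*C*d/a by ring, div_le_div_iff₀ hspos ha]
    nlinarith [mul_nonneg hC.le hd0]
  have e1 : (C/a+1)*d = C*(d/a) + d := by field_simp
  have e2 : (C*(a-s)/(a*s)+1)*a = C*d/s + a := by
    rw [show a - s = d by linarith]
    field_simp
  have e3 : (C*(a-s)/(a*s)+1)*s = C*(d/a) + s := by
    rw [show a - s = d by linarith]
    field_simp
  have htot1 : (FQS.card:ℝ)*d + (FQ.card:ℝ)*a ≤ n*(3*C*(d/a)+a+d) := by
    have h1 := mul_le_mul_of_nonneg_right hb_qs hd0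
    have h2 := mul_le_mul_of_nonneg_right hb_q ha.le
    have h3 : (n:ℝ)*(C*d/s) ≤ n*(2*C*(d/a)) := mul_le_mul_of_nonneg_left hds hn0
    calc (FQS.card:ℝ)*d + (FQ.card:ℝ)*a
        ≤ (n:ℝ)*(C/a+1)*d + (n:ℝ)*(C*(a-s)/(a*s)+1)*a := add_le_add h1 h2
      _ = (n:ℝ)*((C/a+1)*d) + (n:ℝ)*((C*(a-s)/(a*s)+1)*a) := by ring
      _ = (n:ℝ)*(C*(d/a)+d) + (n:ℝ)*(C*d/s + a) := by rw [e1, e2]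
      _ = (n:ℝ)*(C*(d/a)) + (n:ℝ)*d + ((n:ℝ)*(C*d/s) + (n:ℝ)*a) := by ring
      _ ≤ (n:ℝ)*(C*(d/a)) + (n:ℝ)*d + ((n:ℝ)*(2*C*(d/a)) + (n:ℝ)*a) := by linarith
      _ = (n:ℝ)*(3*C*(d/a)+a+d) := by ring
  have htot2 : (FS.card:ℝ)*s ≤ n*(3*C*(d/a)+a+d) := by
    have h1 := mul_le_mul_of_nonneg_right hb_s hspos.le
    have h4 : 0 ≤ (n:ℝ)*(C*(d/a)) := by positivity
    have h5 : (n:ℝ)*s ≤ (n:ℝ)*a := mul_le_mul_of_nonneg_left hsa hn0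
    have h6 : 0 ≤ (n:ℝ)*d := by positivity
    calc (FS.card:ℝ)*s ≤ (n:ℝ)*(C*(a-s)/(a*s)+1)*s := h1
      _ = (n:ℝ)*((C*(a-s)/(a*s)+1)*s) := by ring
      _ = (n:ℝ)*(C*(d/a) + s) := by rw [e3]
      _ = (n:ℝ)*(C*(d/a)) + (n:ℝ)*s := by ring
      _ ≤ (n:ℝ)*(C*(d/a)) + ((n:ℝ)*(C*(d/a)) + (n:ℝ)*(C*(d/a))) + (n:ℝ)*a + (n:ℝ)*d := by
          linarith
      _ = (n:ℝ)*(3*C*(d/a)+a+d) := by ring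
  rw [abs_sub_le_iff]
  exact ⟨by linarith, by linarith⟩

/-- Let `(Q r)` and `(S r)` be families of measurable subsets of `M`
with `S r ⊆ Q r`, `μ (Q r) > 0` for all sufficiently small `r > 0`, `μ (Q r) → 0` and
`μ (Q r ∖ S r)/μ (Q r) → 0` as `r → 0⁺`. Then for every finite collection of pairwise
disjoint bounded intervals `J 1, …, J n ⊆ [0,∞)`, the difference of the avoidance
probabilities for the sections and the quasi-sections tends to `0` as `r → 0⁺`. -/
theorem stmt2 {M : Type*} [MeasurableSpace M] (μ : Measure M) [IsProbabilityMeasure μ]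
    (f : M → M) (hf : MeasurePreserving f μ μ)
    (Q S : ℝ → Set M) (hQmeas : ∀ r, MeasurableSet (Q r)) (hSmeas : ∀ r, MeasurableSet (S r))
    (hsub : ∀ r, S r ⊆ Q r)
    (hQpos : ∀ᶠ r in 𝓝[>] (0 : ℝ), 0 < μ (Q r))
    (hQ0 : Tendsto (fun r => μ (Q r)) (𝓝[>] (0 : ℝ)) (𝓝 0))
    (hdiff : Tendsto (fun r => μ (Q r \ S r) / μ (Q r)) (𝓝[>] (0 : ℝ)) (𝓝 0))
    (n : ℕ) (J : Fin n → Set ℝ)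
    (hJint : ∀ i, (J i).OrdConnected) (hJbdd : ∀ i, Bornology.IsBounded (J i))
    (hJsub : ∀ i, J i ⊆ Ici (0 : ℝ))
    (hJdisj : ∀ i j, i ≠ j → Disjoint (J i) (J j)) :
    Tendsto (fun r =>
      (μ {x | ∀ j : ℕ, (j : ℝ) * (μ (S r)).toReal ∈ ⋃ i, J i → f^[j] x ∉ S r}).toReal
      - (μ {x | ∀ j : ℕ, (j : ℝ) * (μ (Q r)).toReal ∈ ⋃ i, J i → f^[j] x ∉ Q r}).toReal)
      (𝓝[>] (0 : ℝ)) (𝓝 0) := by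
  have hex : ∀ i, ∃ c : ℝ, 0 ≤ c ∧ J i ⊆ Icc 0 c := by
    intro i
    obtain ⟨R, hR⟩ := isBounded_iff_forall_norm_le.mp (hJbdd i)
    exact ⟨max R 0, le_max_right _ _, fun x hx =>
      ⟨hJsub i hx, le_trans (le_abs_self x) (le_trans (hR x hx) (le_max_left _ _))⟩⟩
  choose c hc0 hcs using hex
  set C := 1 + ∑ i, c i with hC_def
  have hsum0 : 0 ≤ ∑ i, c i := Finset.sum_nonneg fun i _ => hc0 i
  have hC : 0 < C := by rw [hC_def]; linarith
  have hJC : ∀ i, J i ⊆ Icc 0 C := by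
    intro i x hx
    refine ⟨hJsub i hx, ?_⟩
    have h1 : x ≤ c i := (hcs i hx).2
    have h2 : c i ≤ ∑ j, c j := Finset.single_le_sum (fun j _ => hc0 j) (Finset.mem_univ i)
    rw [hC_def]; linarith
  have haR : Tendsto (fun r => (μ (Q r)).toReal) (𝓝[>] (0:ℝ)) (𝓝 0) := by
    have := (ENNReal.tendsto_toReal (by simp : (0:ℝ≥0∞) ≠ ⊤)).comp hQ0
    simpa [Function.comp_def] using this
  have hdR : Tendsto (fun r => (μ (Q r \ S r)).toReal) (𝓝[>] (0:ℝ)) (𝓝 0) := by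
    refine squeeze_zero (fun r => ENNReal.toReal_nonneg) (fun r => ?_) haR
    exact ENNReal.toReal_mono (measure_ne_top μ _) (measure_mono diff_subset)
  have hεR : Tendsto (fun r => (μ (Q r \ S r)).toReal / (μ (Q r)).toReal)
      (𝓝[>] (0:ℝ)) (𝓝 0) := by
    have h1 := (ENNReal.tendsto_toReal (by simp : (0:ℝ≥0∞) ≠ ⊤)).comp hdiff
    simp only [Function.comp_def, ENNReal.toReal_zero] at h1
    exact h1.congr (fun r => ENNReal.toReal_div _ _)
  have hg : Tendsto (fun r => (n:ℝ) * (3*C*((μ (Q r \ S r)).toReal/(μ (Q r)).toReal)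
      + (μ (Q r)).toReal + (μ (Q r \ S r)).toReal)) (𝓝[>] (0:ℝ)) (𝓝 0) := by
    have h2 := (tendsto_const_nhds (x := (n:ℝ)) (f := 𝓝[>] (0:ℝ))).mul
      ((((tendsto_const_nhds (x := 3*C) (f := 𝓝[>] (0:ℝ))).mul hεR).add haR).add hdR)
    simpa using h2
  have hev : ∀ᶠ r in 𝓝[>] (0:ℝ), 0 < μ (Q r) ∧ μ (Q r \ S r) / μ (Q r) < 1/2 :=
    hQpos.and (hdiff.eventually_lt_const (by norm_num))
  refine squeeze_zero_norm' ?_ hg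
  filter_upwards [hev] with r hr
  rw [Real.norm_eq_abs]
  exact key μ f hf (Q r) (S r) (hQmeas r) (hSmeas r) (hsub r) n J hJint hC hJC hr.1 hr.2
end

section
/- There is a constant C depending only on N with the following property. For every integer n ≥ 1 and every integer p with 0 < p < n, sup_h |∫ h(𝐗_0, 𝐗_1, …, 𝐗_n) dμ − ∫ h dν^{⊗(n+1)}| ≤ C (R_1 + R_2 + R_3), where R_1 := Σ_{0≤l≤n−p} sup_{a ∈ {0,1}^N, a ≠ 0} sup_h |∫ 1_{𝐗_0 = a} h(𝐗_p, …, 𝐗_{n−l}) dμ − μ(𝐗_0 = a) ∫ h(𝐗_p, …, 𝐗_{n−l}) dμ|, R_2 := n · sup_{a ∈ {0,1}^N, a ≠ 0} μ({𝐗_0 = a} ∩ {𝐗_j ≥ 1 for some 1 ≤ j ≤ p−1}), and R_3 := p n μ(H)^2 + p μ(H). -/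
open MeasureTheory Filter Set Topology
open scoped ENNReal NNReal

section Aux

variable {Ω : Type*} [MeasurableSpace Ω] {μ : Measure Ω} [IsProbabilityMeasure μ]
variable {V : Type*} [Fintype V] [MeasurableSpace V] [MeasurableSingletonClass V]

lemma aux_integrable (G : Ω → V) (hG : Measurable G) (φ : V → ℝ) :
    Integrable (fun ω => φ (G ω)) μ := by
  have hm : Measurable fun ω => φ (G ω) := (measurable_of_countable φ).comp hG
  refine ⟨hm.aestronglyMeasurable,
    HasFiniteIntegral.of_bounded (C := ∑ v, |φ v|) (ae_of_all _ fun ω => ?_)⟩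
  rw [Real.norm_eq_abs]
  exact Finset.single_le_sum (f := fun v => |φ v|) (fun v _ => abs_nonneg _)
    (Finset.mem_univ (G ω))

lemma aux_integral_comp (G : Ω → V) (hG : Measurable G) (φ : V → ℝ) :
    ∫ ω, φ (G ω) ∂μ = ∑ v, (μ (G ⁻¹' {v})).toReal * φ v := by
  have : IsProbabilityMeasure (Measure.map G μ) :=
    Measure.isProbabilityMeasure_map hG.aemeasurable
  rw [← integral_map hG.aemeasurable (measurable_of_countable φ).aestronglyMeasurable,
    integral_fintype .of_finite]
  simp only [measureReal_def]
  refine Finset.sum_congr rfl fun v _ => ?_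
  rw [Measure.map_apply hG (measurableSet_singleton v), smul_eq_mul]

lemma aux_partition (G : Ω → V) (hG : Measurable G) (f : Ω → ℝ) (hf : Integrable f μ) :
    ∫ ω, f ω ∂μ = ∑ v, ∫ ω in G ⁻¹' {v}, f ω ∂μ := by
  have h1 : ∀ ω, f ω = ∑ v, Set.indicator (G ⁻¹' {v}) f ω := by
    intro ω
    rw [Finset.sum_eq_single (G ω)]
    · simp [Set.indicator_of_mem, Set.mem_preimage]
    · intro b _ hb
      exact Set.indicator_of_notMem (by simp [Ne.symm hb]) f
    · intro hmem; exact absurd (Finset.mem_univ _) hmem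
  calc ∫ ω, f ω ∂μ = ∫ ω, ∑ v, Set.indicator (G ⁻¹' {v}) f ω ∂μ := by
        congr 1; funext ω; exact h1 ω
    _ = ∑ v, ∫ ω, Set.indicator (G ⁻¹' {v}) f ω ∂μ :=
        integral_finset_sum _ (fun v _ => hf.indicator (hG (measurableSet_singleton v)))
    _ = ∑ v, ∫ ω in G ⁻¹' {v}, f ω ∂μ := by
        refine Finset.sum_congr rfl fun v _ => ?_
        exact integral_indicator (hG (measurableSet_singleton v))

lemma aux_sum_singleton (ν : Measure V) (s : Finset V) : ∑ a ∈ s, ν {a} = ν ↑s := by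
  rw [← measure_biUnion_finset ?_ (fun a _ => measurableSet_singleton a)]
  · congr 1
    ext x; simp
  · intro a _ b _ hab
    simp [Function.onFun, hab]

lemma aux_abs_integral_le (f : Ω → ℝ) (hf : ∀ ω, |f ω| ≤ 1) : |∫ ω, f ω ∂μ| ≤ 1 := by
  have := norm_integral_le_of_norm_le_const (μ := μ) (f := f) (C := 1)
    (ae_of_all _ fun ω => by simpa using hf ω)
  simpa using this

lemma aux_abs_setIntegral_le (f : Ω → ℝ) (hf : ∀ ω, |f ω| ≤ 1) (s : Set Ω)
    (hs : MeasurableSet s) : |∫ ω in s, f ω ∂μ| ≤ (μ s).toReal := by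
  have := norm_setIntegral_le_of_norm_le_const (μ := μ) (f := f) (C := 1)
    (measure_lt_top μ s) (fun x _ => by simpa using hf x)
  simpa [measureReal_def] using this

/-- Stationarity transfer. -/
lemma aux_stationary {S : Ω → Ω} (hS : MeasurePreserving S μ μ) (G : Ω → V)
    (hG : Measurable G) (φ : V → ℝ) :
    ∫ ω, φ (G (S ω)) ∂μ = ∫ ω, φ (G ω) ∂μ := by
  conv_rhs => rw [← hS.map_eq]
  exact (integral_map hS.measurable.aemeasurable
    ((measurable_of_countable φ).comp hG).aestronglyMeasurable).symm

/-- Peeling the first coordinate of a finite product measure. -/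
lemma aux_pi_peel (ν : Measure V) [IsProbabilityMeasure ν] (m : ℕ)
    (g : (Fin (m + 1) → V) → ℝ) :
    ∫ v, g v ∂(Measure.pi fun _ : Fin (m + 1) => ν)
      = ∑ a, (ν {a}).toReal * ∫ v, g (Fin.cons a v) ∂(Measure.pi fun _ : Fin m => ν) := by
  rw [integral_fintype .of_finite]
  simp only [measureReal_def]
  have hsum : ∀ (k : ℕ) (w : Fin k → V),
      (Measure.pi fun _ : Fin k => ν) {w} = ∏ i, ν {w i} := by
    intro k w
    rw [← Set.univ_pi_singleton, Measure.pi_pi]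
  calc ∑ w : Fin (m+1) → V, ((Measure.pi fun _ : Fin (m+1) => ν) {w}).toReal • g w
      = ∑ x : V × (Fin m → V), ((Measure.pi fun _ : Fin (m+1) => ν)
          {Fin.cons x.1 x.2}).toReal • g (Fin.cons x.1 x.2) := by
        refine (Fintype.sum_equiv (Fin.consEquiv fun _ => V) _ _ fun x => ?_).symm
        rfl
    _ = ∑ a, (ν {a}).toReal * ∫ v, g (Fin.cons a v) ∂(Measure.pi fun _ : Fin m => ν) := by
        rw [Fintype.sum_prod_type]
        refine Finset.sum_congr rfl fun a _ => ?_
        rw [integral_fintype .of_finite, Finset.mul_sum]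
        simp only [measureReal_def]
        refine Finset.sum_congr rfl fun v _ => ?_
        rw [hsum, hsum, Fin.prod_univ_succ, smul_eq_mul, smul_eq_mul]
        simp only [Fin.cons_zero, Fin.cons_succ]
        rw [ENNReal.toReal_mul, mul_assoc]

end Aux


/-- The block vector `𝐗_i = (1_H ∘ T^{Ni}, …, 1_H ∘ T^{N(i+1)-1})`, with values in
`{0,1}^N`, encoded as `Fin N → Bool` (`true` means the orbit point lies in `H`). -/
noncomputable def blockVec {Ω : Type*} (T : Ω → Ω) (H : Set Ω) (N : ℕ) (i : ℕ) (ω : Ω) :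
    Fin N → Bool :=
  fun j => @decide (T^[N * i + j.1] ω ∈ H) (Classical.propDecidable _)

set_option maxHeartbeats 4000000 in
/-- There is a constant `C` depending only on `N` such that for every
integer `n ≥ 1` and every integer `0 < p < n`, for every `[0,1]`-valued `h`,
`|∫ h(𝐗_0, …, 𝐗_n) dμ − ∫ h dν^{⊗(n+1)}| ≤ C (R₁ + R₂ + R₃)`, where `ν` is the law of
`𝐗_0`, `R₁` is the sum of decorrelation errors, `R₂` the short-return term and
`R₃ = p n μ(H)² + p μ(H)`. -/
theorem stmt5 (N : ℕ) (hN : 1 ≤ N) :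
    ∃ C : ℝ, 0 < C ∧
    ∀ (Ω : Type*) [MeasurableSpace Ω] (μ : Measure Ω) [IsProbabilityMeasure μ]
      (T : Ω → Ω), MeasurePreserving T μ μ →
    ∀ (H : Set Ω), MeasurableSet H → 0 < μ H →
    ∀ n p : ℕ, 1 ≤ n → 0 < p → p < n →
    ∀ h : (Fin (n + 1) → (Fin N → Bool)) → ℝ, (∀ v, h v ∈ Icc (0 : ℝ) 1) →
    |(∫ ω, h (fun i => blockVec T H N i.1 ω) ∂μ)
        - ∫ v, h v ∂(Measure.pi fun _ : Fin (n + 1) => Measure.map (blockVec T H N 0) μ)|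
      ≤ C * (
        (∑ l ∈ Finset.range (n - p + 1),
          ⨆ (a : Fin N → Bool) (_ : a ≠ fun _ => false),
          ⨆ h' : (Fin (n - l - p + 1) → (Fin N → Bool)) → Icc (0 : ℝ) 1,
          |(∫ ω in {ω | blockVec T H N 0 ω = a},
              (h' (fun t => blockVec T H N (p + t.1) ω) : ℝ) ∂μ)
            - (μ {ω | blockVec T H N 0 ω = a}).toReal
              * ∫ ω, (h' (fun t => blockVec T H N (p + t.1) ω) : ℝ) ∂μ|)
        + (n : ℝ) *
            ⨆ (a : Fin N → Bool) (_ : a ≠ fun _ => false),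
            (μ ({ω | blockVec T H N 0 ω = a}
              ∩ {ω | ∃ j : ℕ, 1 ≤ j ∧ j ≤ p - 1 ∧ ∃ k, blockVec T H N j ω k = true})).toReal
        + ((p : ℝ) * n * (μ H).toReal ^ 2 + (p : ℝ) * (μ H).toReal)) := by
    classical
  refine ⟨2^(N+1) + 2*(N:ℝ)^2 + 4*N + 1, by positivity, ?_⟩
  intro Ω _ μ _ T hT H hH _hHpos n p hn hp hpn h hh
  set X := blockVec T H N with hXdef
  set z : Fin N → Bool := fun _ => false with hzdef
  -- measurability of the blocks
  have hXcoord : ∀ (i : ℕ) (k : Fin N), Measurable (fun ω => X i ω k) := by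
    intro i k
    have hset : MeasurableSet ((T^[N * i + k.1]) ⁻¹' H) := (hT.iterate (N*i+k.1)).measurable hH
    have he : (fun ω => X i ω k)
        = fun ω => if T^[N * i + k.1] ω ∈ H then true else false := by
      funext ω
      show (@decide (T^[N * i + k.1] ω ∈ H) (Classical.propDecidable _)) = _
      by_cases hx : T^[N * i + k.1] ω ∈ H <;> simp [hx]
    rw [he]
    exact Measurable.ite hset measurable_const measurable_const
  have hXmeas : ∀ i, Measurable (X i) := fun i => measurable_pi_lambda _ (fun k => hXcoord i k)
  have hS : MeasurePreserving (T^[N]) μ μ := hT.iterate N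
  have hshift : ∀ (i : ℕ) (ω : Ω), X (i+1) ω = X i (T^[N] ω) := by
    intro i ω
    funext k
    have hpt : T^[N*(i+1)+k.1] ω = T^[N*i+k.1] (T^[N] ω) := by
      rw [show N*(i+1)+k.1 = N*i+k.1+N from by ring]
      exact Function.iterate_add_apply T _ N ω
    show (@decide (T^[N*(i+1)+k.1] ω ∈ H) (Classical.propDecidable _))
        = (@decide (T^[N*i+k.1] (T^[N] ω) ∈ H) (Classical.propDecidable _))
    rw [decide_eq_decide, hpt]
  have hXtrue : ∀ (i : ℕ) (ω : Ω) (k : Fin N), X i ω k = true → T^[N*i+k.1] ω ∈ H := by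
    intro i ω k hk
    exact of_decide_eq_true hk
  set ν := Measure.map (X 0) μ with hνdef
  have hνprob : IsProbabilityMeasure ν := Measure.isProbabilityMeasure_map (hXmeas 0).aemeasurable
  have hνa : ∀ a, ν {a} = μ {ω | X 0 ω = a} :=
    fun a => Measure.map_apply (hXmeas 0) (measurableSet_singleton a)
  have hSetA : ∀ a : Fin N → Bool, MeasurableSet {ω | X 0 ω = a} :=
    fun a => (hXmeas 0) (measurableSet_singleton a)
  -- the bad set of short returns
  set Bad : Set Ω := {ω | ∃ j : ℕ, 1 ≤ j ∧ j ≤ p - 1 ∧ ∃ k, X j ω k = true} with hBaddef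
  have hBadMeas : MeasurableSet Bad := by
    have hBeq : Bad = ⋃ (j : ℕ) (_ : 1 ≤ j ∧ j ≤ p - 1) (k : Fin N),
        (fun ω => X j ω k) ⁻¹' {true} := by
      rw [hBaddef]; ext ω
      simp only [Set.mem_setOf_eq, Set.mem_iUnion, Set.mem_preimage, Set.mem_singleton_iff]
      constructor
      · rintro ⟨j, h1, h2, k, hk⟩; exact ⟨j, ⟨h1, h2⟩, k, hk⟩
      · rintro ⟨j, ⟨h1, h2⟩, k, hk⟩; exact ⟨j, h1, h2, k, hk⟩
    rw [hBeq]
    exact MeasurableSet.iUnion fun j => MeasurableSet.iUnion fun _ =>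
      MeasurableSet.iUnion fun k => (hXcoord j k) (measurableSet_singleton true)
  have hμH_ne : μ H ≠ ∞ := measure_ne_top μ H
  set x : ℝ := (μ H).toReal with hxdef
  have hxnn : 0 ≤ x := ENNReal.toReal_nonneg
  have htoReal1 : ∀ s : Set Ω, (μ s).toReal ≤ 1 := by
    intro s
    calc (μ s).toReal ≤ (1 : ℝ≥0∞).toReal := ENNReal.toReal_mono (by simp) prob_le_one
      _ = 1 := by simp
  have hνtoReal1 : ∀ a, (ν {a}).toReal ≤ 1 := by
    intro a
    calc (ν {a}).toReal ≤ (1 : ℝ≥0∞).toReal := ENNReal.toReal_mono (by simp) prob_le_one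
      _ = 1 := by simp
  have hIccAbs : ∀ r : ℝ, r ∈ Icc (0:ℝ) 1 → |r| ≤ 1 := by
    intro r hr; rw [abs_le]; exact ⟨by linarith [hr.1], hr.2⟩
  -- sum of non-zero block-value probabilities
  have hsum_nu_erase : ∑ a ∈ Finset.univ.erase z, (ν {a}).toReal ≤ (N:ℝ) * x := by
    have h1 : ∑ a ∈ Finset.univ.erase z, ν {a} = ν ↑(Finset.univ.erase z) :=
      aux_sum_singleton ν _
    have hsub : (↑(Finset.univ.erase z) : Set (Fin N → Bool)) = {z}ᶜ := by
      ext a; simp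
    have h2 : ν {z}ᶜ ≤ (N : ℝ≥0∞) * μ H := by
      have hmap : ν {z}ᶜ = μ (X 0 ⁻¹' {z}ᶜ) :=
        Measure.map_apply (hXmeas 0) (measurableSet_singleton z).compl
      rw [hmap]
      have hsub2 : X 0 ⁻¹' {z}ᶜ ⊆ ⋃ k : Fin N, (T^[N*0+k.1]) ⁻¹' H := by
        intro ω hω
        have hne : X 0 ω ≠ z := hω
        have hk : ∃ k, X 0 ω k = true := by
          by_contra hc
          push_neg at hc
          apply hne
          funext k
          have := hc k
          rw [hzdef]
          exact Bool.eq_false_iff.mpr this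
        obtain ⟨k, hk⟩ := hk
        exact Set.mem_iUnion.2 ⟨k, hXtrue 0 ω k hk⟩
      calc μ (X 0 ⁻¹' {z}ᶜ) ≤ μ (⋃ k : Fin N, (T^[N*0+k.1]) ⁻¹' H) := measure_mono hsub2
        _ ≤ ∑ k : Fin N, μ ((T^[N*0+k.1]) ⁻¹' H) := measure_iUnion_fintype_le _ _
        _ = ∑ _k : Fin N, μ H := by
            refine Finset.sum_congr rfl fun k _ => ?_
            exact (hT.iterate (N*0+k.1)).measure_preimage hH.nullMeasurableSet
        _ = (N : ℝ≥0∞) * μ H := by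
            rw [Finset.sum_const, Finset.card_univ, Fintype.card_fin, nsmul_eq_mul]
    calc ∑ a ∈ Finset.univ.erase z, (ν {a}).toReal
        = (∑ a ∈ Finset.univ.erase z, ν {a}).toReal :=
          (ENNReal.toReal_sum (fun a _ => measure_ne_top ν _)).symm
      _ ≤ ((N : ℝ≥0∞) * μ H).toReal := by
          refine ENNReal.toReal_mono (ENNReal.mul_ne_top (ENNReal.natCast_ne_top N) hμH_ne) ?_
          rw [h1, hsub]; exact h2
      _ = (N:ℝ) * x := by rw [ENNReal.toReal_mul, ENNReal.toReal_natCast]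
  -- bound on the measure of the bad set
  have hBadle : (μ Bad).toReal ≤ (p:ℝ) * ((N:ℝ) * x) := by
    have hsub2 : Bad ⊆ ⋃ (j : Fin p), ⋃ (k : Fin N), (T^[N*j.1+k.1]) ⁻¹' H := by
      rintro ω ⟨j, hj1, hj2, k, hk⟩
      have hjp : j < p := by omega
      exact Set.mem_iUnion.2 ⟨⟨j, hjp⟩, Set.mem_iUnion.2 ⟨k, hXtrue j ω k hk⟩⟩
    have h2 : μ Bad ≤ (p : ℝ≥0∞) * ((N : ℝ≥0∞) * μ H) := by
      calc μ Bad ≤ μ (⋃ (j : Fin p), ⋃ (k : Fin N), (T^[N*j.1+k.1]) ⁻¹' H) :=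
            measure_mono hsub2
        _ ≤ ∑ j : Fin p, μ (⋃ (k : Fin N), (T^[N*j.1+k.1]) ⁻¹' H) :=
            measure_iUnion_fintype_le _ _
        _ ≤ ∑ j : Fin p, ∑ k : Fin N, μ ((T^[N*j.1+k.1]) ⁻¹' H) :=
            Finset.sum_le_sum (fun j _ => measure_iUnion_fintype_le _ _)
        _ = ∑ _j : Fin p, ∑ _k : Fin N, μ H := by
            refine Finset.sum_congr rfl fun j _ => Finset.sum_congr rfl fun k _ => ?_
            exact (hT.iterate (N*j.1+k.1)).measure_preimage hH.nullMeasurableSet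
        _ = (p : ℝ≥0∞) * ((N : ℝ≥0∞) * μ H) := by
            simp [Finset.sum_const, Finset.card_univ, nsmul_eq_mul, mul_assoc]
    calc (μ Bad).toReal ≤ ((p : ℝ≥0∞) * ((N : ℝ≥0∞) * μ H)).toReal := by
          refine ENNReal.toReal_mono ?_ h2
          exact ENNReal.mul_ne_top (ENNReal.natCast_ne_top p)
            (ENNReal.mul_ne_top (ENNReal.natCast_ne_top N) hμH_ne)
      _ = (p:ℝ) * ((N:ℝ) * x) := by
          rw [ENNReal.toReal_mul, ENNReal.toReal_mul, ENNReal.toReal_natCast,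
            ENNReal.toReal_natCast]
  -- a distinguished non-zero letter
  have ha1 : (fun _ => true : Fin N → Bool) ≠ z := by
    intro hcontra
    have := congrFun hcontra ⟨0, hN⟩
    rw [hzdef] at this
    simp at this
  -- the two suprema from the statement
  set Esup : ℝ := ⨆ (a : Fin N → Bool) (_ : a ≠ z),
      (μ ({ω | X 0 ω = a} ∩ Bad)).toReal with hEsupdef
  set T1 : ℕ → ℝ := fun l =>
      ⨆ (a : Fin N → Bool) (_ : a ≠ z),
      ⨆ h' : (Fin (n - l - p + 1) → (Fin N → Bool)) → Icc (0 : ℝ) 1,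
      |(∫ ω in {ω | X 0 ω = a}, (h' (fun t => X (p + t.1) ω) : ℝ) ∂μ)
        - (μ {ω | X 0 ω = a}).toReal * ∫ ω, (h' (fun t => X (p + t.1) ω) : ℝ) ∂μ|
    with hT1def
  -- `le_ciSup` plumbing for Esup
  have hEsup_ge : ∀ a, a ≠ z → (μ ({ω | X 0 ω = a} ∩ Bad)).toReal ≤ Esup := by
    intro a ha
    have hbdd : BddAbove (Set.range fun a : Fin N → Bool =>
        ⨆ (_ : a ≠ z), (μ ({ω | X 0 ω = a} ∩ Bad)).toReal) := by
      refine ⟨1, ?_⟩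
      rintro r ⟨b, rfl⟩
      dsimp only
      by_cases hb : b ≠ z
      · haveI : Nonempty (b ≠ z) := ⟨hb⟩
        rw [ciSup_const]
        exact htoReal1 _
      · haveI : IsEmpty (b ≠ z) := ⟨fun hc => hc (not_not.1 hb)⟩
        rw [Real.iSup_of_isEmpty]
        norm_num
    have h1 : (μ ({ω | X 0 ω = a} ∩ Bad)).toReal
        = ⨆ (_ : a ≠ z), (μ ({ω | X 0 ω = a} ∩ Bad)).toReal := by
      haveI : Nonempty (a ≠ z) := ⟨ha⟩
      rw [ciSup_const]
    rw [hEsupdef, h1]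
    exact le_ciSup hbdd a
  have hEsup_nonneg : 0 ≤ Esup :=
    le_trans ENNReal.toReal_nonneg (hEsup_ge _ ha1)
  -- `le_ciSup` plumbing for T1
  have hT1_ge : ∀ (l : ℕ) (a : Fin N → Bool), a ≠ z →
      ∀ h' : (Fin (n - l - p + 1) → (Fin N → Bool)) → Icc (0 : ℝ) 1,
      |(∫ ω in {ω | X 0 ω = a}, (h' (fun t => X (p + t.1) ω) : ℝ) ∂μ)
        - (μ {ω | X 0 ω = a}).toReal * ∫ ω, (h' (fun t => X (p + t.1) ω) : ℝ) ∂μ|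
      ≤ T1 l := by
    intro l a ha h'
    have hval2 : ∀ (b : Fin N → Bool)
        (h'' : (Fin (n - l - p + 1) → (Fin N → Bool)) → Icc (0 : ℝ) 1),
        |(∫ ω in {ω | X 0 ω = b}, (h'' (fun t => X (p + t.1) ω) : ℝ) ∂μ)
          - (μ {ω | X 0 ω = b}).toReal * ∫ ω, (h'' (fun t => X (p + t.1) ω) : ℝ) ∂μ| ≤ 2 := by
      intro b h''
      have hf1 : ∀ ω : Ω, |(h'' (fun t => X (p + t.1) ω) : ℝ)| ≤ 1 :=
        fun ω => hIccAbs _ (h'' _).2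
      have e1 := aux_abs_setIntegral_le (μ := μ)
        (fun ω => (h'' (fun t => X (p + t.1) ω) : ℝ)) hf1 _ (hSetA b)
      have e2 := aux_abs_integral_le (μ := μ)
        (fun ω => (h'' (fun t => X (p + t.1) ω) : ℝ)) hf1
      have e3 := htoReal1 {ω | X 0 ω = b}
      have e4 : |(μ {ω | X 0 ω = b}).toReal
          * ∫ ω, (h'' (fun t => X (p + t.1) ω) : ℝ) ∂μ| ≤ 1 := by
        rw [abs_mul, abs_of_nonneg ENNReal.toReal_nonneg]
        calc (μ {ω | X 0 ω = b}).toReal * |∫ ω, (h'' (fun t => X (p + t.1) ω) : ℝ) ∂μ|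
            ≤ 1 * 1 := by
              exact mul_le_mul e3 e2 (abs_nonneg _) zero_le_one
          _ = 1 := by ring
      calc |(∫ ω in {ω | X 0 ω = b}, (h'' (fun t => X (p + t.1) ω) : ℝ) ∂μ)
            - (μ {ω | X 0 ω = b}).toReal * ∫ ω, (h'' (fun t => X (p + t.1) ω) : ℝ) ∂μ|
          ≤ |(∫ ω in {ω | X 0 ω = b}, (h'' (fun t => X (p + t.1) ω) : ℝ) ∂μ)|
            + |(μ {ω | X 0 ω = b}).toReal
              * ∫ ω, (h'' (fun t => X (p + t.1) ω) : ℝ) ∂μ| := abs_sub _ _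
        _ ≤ 1 + 1 := add_le_add (le_trans e1 e3) e4
        _ = 2 := by norm_num
    have hbdd2 : ∀ b : Fin N → Bool, BddAbove (Set.range fun h'' :
        (Fin (n - l - p + 1) → (Fin N → Bool)) → Icc (0 : ℝ) 1 =>
        |(∫ ω in {ω | X 0 ω = b}, (h'' (fun t => X (p + t.1) ω) : ℝ) ∂μ)
          - (μ {ω | X 0 ω = b}).toReal * ∫ ω, (h'' (fun t => X (p + t.1) ω) : ℝ) ∂μ|) := by
      intro b
      exact ⟨2, by rintro r ⟨h'', rfl⟩; exact hval2 b h''⟩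
    have hbdd1 : BddAbove (Set.range fun a : Fin N → Bool =>
        ⨆ (_ : a ≠ z), ⨆ h'' : (Fin (n - l - p + 1) → (Fin N → Bool)) → Icc (0 : ℝ) 1,
        |(∫ ω in {ω | X 0 ω = a}, (h'' (fun t => X (p + t.1) ω) : ℝ) ∂μ)
          - (μ {ω | X 0 ω = a}).toReal * ∫ ω, (h'' (fun t => X (p + t.1) ω) : ℝ) ∂μ|) := by
      refine ⟨2, ?_⟩
      rintro r ⟨b, rfl⟩
      dsimp only
      by_cases hb : b ≠ z
      · haveI : Nonempty (b ≠ z) := ⟨hb⟩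
        rw [ciSup_const]
        exact Real.iSup_le (fun h'' => hval2 b h'') (by norm_num)
      · haveI : IsEmpty (b ≠ z) := ⟨fun hc => hc (not_not.1 hb)⟩
        rw [Real.iSup_of_isEmpty]
        norm_num
    calc |(∫ ω in {ω | X 0 ω = a}, (h' (fun t => X (p + t.1) ω) : ℝ) ∂μ)
          - (μ {ω | X 0 ω = a}).toReal * ∫ ω, (h' (fun t => X (p + t.1) ω) : ℝ) ∂μ|
        ≤ ⨆ h'' : (Fin (n - l - p + 1) → (Fin N → Bool)) → Icc (0 : ℝ) 1,
          |(∫ ω in {ω | X 0 ω = a}, (h'' (fun t => X (p + t.1) ω) : ℝ) ∂μ)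
            - (μ {ω | X 0 ω = a}).toReal
              * ∫ ω, (h'' (fun t => X (p + t.1) ω) : ℝ) ∂μ| := le_ciSup (hbdd2 a) h'
      _ = ⨆ (_ : a ≠ z), ⨆ h'' : (Fin (n - l - p + 1) → (Fin N → Bool)) → Icc (0 : ℝ) 1,
          |(∫ ω in {ω | X 0 ω = a}, (h'' (fun t => X (p + t.1) ω) : ℝ) ∂μ)
            - (μ {ω | X 0 ω = a}).toReal
              * ∫ ω, (h'' (fun t => X (p + t.1) ω) : ℝ) ∂μ| := by
          haveI : Nonempty (a ≠ z) := ⟨ha⟩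
          rw [ciSup_const]
      _ ≤ T1 l := by
          rw [hT1def]
          exact le_ciSup hbdd1 a
  have hT1_nonneg : ∀ l, 0 ≤ T1 l := by
    intro l
    exact le_trans (abs_nonneg _)
      (hT1_ge l (fun _ => true) ha1 (fun _ => ⟨0, by norm_num⟩))
  -- the step weights
  set s : ℕ → ℝ := fun j => if p + 1 ≤ j
      then 2^(N+1) * (T1 (n+1-j) + Esup) + 2*(N:ℝ)^2*p*x^2
      else 4*(N:ℝ)*x with hsdef
  have hs_small : ∀ j, ¬ (p + 1 ≤ j) → s j = 4*(N:ℝ)*x := by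
    intro j hj; rw [hsdef]; dsimp only; rw [if_neg hj]
  have hs_big : ∀ j, p + 1 ≤ j → s j = 2^(N+1) * (T1 (n+1-j) + Esup) + 2*(N:ℝ)^2*p*x^2 := by
    intro j hj; rw [hsdef]; dsimp only; rw [if_pos hj]
  have hs_nonneg : ∀ j, 0 ≤ s j := by
    intro j
    rw [hsdef]; dsimp only
    split_ifs with hj
    · have h1 : (0:ℝ) ≤ 2^(N+1) := by positivity
      have h2 : (0:ℝ) ≤ 2^(N+1) * (T1 (n+1-j) + Esup) :=
        mul_nonneg h1 (add_nonneg (hT1_nonneg (n+1-j)) hEsup_nonneg)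
      have h3 : (0:ℝ) ≤ 2*(N:ℝ)^2*p*x^2 := by positivity
      linarith
    · have h1 : (0:ℝ) ≤ 4*(N:ℝ) := by positivity
      exact mul_nonneg h1 hxnn
  -- sum of all singleton ν-masses is 1
  have hνsum1 : ∑ a : Fin N → Bool, (ν {a}).toReal = 1 := by
    rw [← ENNReal.toReal_sum (fun a _ => measure_ne_top ν _), aux_sum_singleton ν Finset.univ]
    simp
  -- THE MAIN INDUCTION
  have key : ∀ m : ℕ, m ≤ n → ∀ g : (Fin (m+1) → (Fin N → Bool)) → ℝ,
      (∀ v, g v ∈ Icc (0:ℝ) 1) →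
      |(∫ ω, g (fun t => X t.1 ω) ∂μ)
          - ∫ v, g v ∂(Measure.pi fun _ : Fin (m+1) => ν)|
        ≤ ∑ j ∈ Finset.range (m+1), s (j+1) := by
    intro m
    induction m with
    | zero =>
      intro _ g hg
      have hXv : Measurable (fun ω => (fun t : Fin 1 => X t.1 ω)) :=
        measurable_pi_lambda _ (fun t => hXmeas t.1)
      have heq : ∫ ω, g (fun t : Fin 1 => X t.1 ω) ∂μ
          = ∫ v, g v ∂(Measure.pi fun _ : Fin 1 => ν) := by
        have e1 : ∫ ω, g (fun t : Fin 1 => X t.1 ω) ∂μ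
            = ∑ v : Fin 1 → (Fin N → Bool),
                (μ ((fun ω => (fun t : Fin 1 => X t.1 ω)) ⁻¹' {v})).toReal * g v :=
          aux_integral_comp _ hXv g
        have e2 : ∫ v, g v ∂(Measure.pi fun _ : Fin 1 => ν)
            = ∑ v : Fin 1 → (Fin N → Bool),
                ((Measure.pi fun _ : Fin 1 => ν) {v}).toReal • g v :=
          by rw [integral_fintype .of_finite]; simp only [measureReal_def]
        rw [e1, e2]
        refine Finset.sum_congr rfl fun v _ => ?_
        rw [smul_eq_mul]
        congr 1
        have hpre : (fun ω => (fun t : Fin 1 => X t.1 ω)) ⁻¹' {v} = {ω | X 0 ω = v 0} := by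
          ext ω
          simp only [Set.mem_preimage, Set.mem_singleton_iff, Set.mem_setOf_eq]
          constructor
          · intro hv; exact congrFun hv 0
          · intro hv; funext t
            have ht : t = 0 := Subsingleton.elim t 0
            rw [ht]; exact hv
        rw [hpre, ← Set.univ_pi_singleton, Measure.pi_pi]
        rw [show (∏ i : Fin 1, ν {v i}) = ν {v 0} from by
          rw [Fin.prod_univ_one]]
        rw [hνa]
      rw [heq, sub_self, abs_zero]
      rw [Finset.sum_range_one]
      exact hs_nonneg 1
    | succ m ih =>
      intro hm1 g hg
      have hmn : m ≤ n := le_trans (Nat.le_succ m) hm1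
      -- shifted block vectors
      set Y : Ω → (Fin (m+1) → (Fin N → Bool)) := fun ω t => X (t.1+1) ω with hYdef
      have hYm : Measurable Y := measurable_pi_lambda _ (fun t => hXmeas _)
      have hY0m : Measurable (fun ω => (fun t : Fin (m+1) => X t.1 ω)) :=
        measurable_pi_lambda _ (fun t => hXmeas _)
      have hXvecm : Measurable (fun ω => (fun t : Fin (m+2) => X t.1 ω)) :=
        measurable_pi_lambda _ (fun t => hXmeas _)
      set ga : (Fin N → Bool) → (Fin (m+1) → (Fin N → Bool)) → ℝ :=
        fun a v => g (Fin.cons a v) with hgadef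
      have hga01 : ∀ a v, ga a v ∈ Icc (0:ℝ) 1 := fun a v => hg _
      have hGint : ∀ b, Integrable (fun ω => ga b (Y ω)) μ :=
        fun b => aux_integrable Y hYm (ga b)
      -- Identity 1 : partition over the first block
      have hint_g : Integrable (fun ω => g (fun t : Fin (m+2) => X t.1 ω)) μ :=
        aux_integrable (fun ω => (fun t : Fin (m+2) => X t.1 ω)) hXvecm g
      have e1 : ∫ ω, g (fun t : Fin (m+2) => X t.1 ω) ∂μ
          = ∑ a : Fin N → Bool, ∫ ω in {ω | X 0 ω = a}, g (fun t : Fin (m+2) => X t.1 ω) ∂μ :=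
        aux_partition (X 0) (hXmeas 0) _ hint_g
      have e1' : ∀ a, ∫ ω in {ω | X 0 ω = a}, g (fun t : Fin (m+2) => X t.1 ω) ∂μ
          = ∫ ω in {ω | X 0 ω = a}, ga a (Y ω) ∂μ := by
        intro a
        refine setIntegral_congr_fun (hSetA a) ?_
        intro ω hω
        have hcons : (fun t : Fin (m+2) => X t.1 ω) = Fin.cons a (Y ω) := by
          funext i
          induction i using Fin.cases with
          | zero => rw [Fin.cons_zero]; exact hω
          | succ t => rw [Fin.cons_succ]; rfl
        show g (fun t : Fin (m+2) => X t.1 ω) = ga a (Y ω)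
        rw [hcons]
      have e1'' : ∫ ω, g (fun t : Fin (m+2) => X t.1 ω) ∂μ
          = ∑ a : Fin N → Bool, ∫ ω in {ω | X 0 ω = a}, ga a (Y ω) ∂μ := by
        rw [e1]; exact Finset.sum_congr rfl fun a _ => e1' a
      -- Identity 2 : peel the product measure
      have e2 : ∫ v, g v ∂(Measure.pi fun _ : Fin (m+2) => ν)
          = ∑ a, (ν {a}).toReal * ∫ v, ga a v ∂(Measure.pi fun _ : Fin (m+1) => ν) :=
        aux_pi_peel ν (m+1) g
      -- Identity 3 : stationarity
      have e3 : ∀ b, ∫ ω, ga b (Y ω) ∂μ = ∫ ω, ga b (fun t : Fin (m+1) => X t.1 ω) ∂μ := by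
        intro b
        have hcomp : ∀ ω, ga b (Y ω) = ga b (fun t : Fin (m+1) => X t.1 (T^[N] ω)) := by
          intro ω
          congr 1
          funext t
          exact hshift t.1 ω
        calc ∫ ω, ga b (Y ω) ∂μ
            = ∫ ω, ga b (fun t : Fin (m+1) => X t.1 (T^[N] ω)) ∂μ := by
              exact integral_congr_ae (ae_of_all _ fun ω => hcomp ω)
          _ = ∫ ω, ga b (fun t : Fin (m+1) => X t.1 ω) ∂μ :=
              aux_stationary hS (fun ω => (fun t : Fin (m+1) => X t.1 ω)) hY0m (ga b)
      -- the one-step correlation terms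
      set D : (Fin N → Bool) → ℝ := fun a =>
        (∫ ω in {ω | X 0 ω = a}, ga a (Y ω) ∂μ) - (ν {a}).toReal * ∫ ω, ga a (Y ω) ∂μ
        with hDdef
      set E : (Fin N → Bool) → ℝ := fun a =>
        (∫ ω in {ω | X 0 ω = a}, ga z (Y ω) ∂μ) - (ν {a}).toReal * ∫ ω, ga z (Y ω) ∂μ
        with hEdef
      have hEzero : ∑ a, E a = 0 := by
        have hpart : ∫ ω, ga z (Y ω) ∂μ
            = ∑ a : Fin N → Bool, ∫ ω in {ω | X 0 ω = a}, ga z (Y ω) ∂μ :=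
          aux_partition (X 0) (hXmeas 0) _ (hGint z)
        rw [hEdef]
        dsimp only
        rw [Finset.sum_sub_distrib, ← Finset.sum_mul, hνsum1, one_mul, ← hpart, sub_self]
      have hDz : D z = - ∑ a ∈ Finset.univ.erase z, E a := by
        have h0 := hEzero
        rw [← Finset.add_sum_erase _ E (Finset.mem_univ z)] at h0
        have hEz : E z = D z := rfl
        linarith [h0, hEz.symm.le, hEz.le]
      have hsplitD : ∑ a, D a = ∑ a ∈ Finset.univ.erase z, (D a - E a) := by
        have hsb : ∑ a ∈ Finset.univ.erase z, (D a - E a)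
            = ∑ a ∈ Finset.univ.erase z, D a - ∑ a ∈ Finset.univ.erase z, E a :=
          Finset.sum_sub_distrib _ _
        rw [← Finset.add_sum_erase _ D (Finset.mem_univ z), hDz, hsb]
        ring
      -- main decomposition
      have hmain : (∫ ω, g (fun t : Fin (m+2) => X t.1 ω) ∂μ)
          - ∫ v, g v ∂(Measure.pi fun _ : Fin (m+2) => ν)
          = (∑ a, D a) + ∑ a, (ν {a}).toReal *
              ((∫ ω, ga a (fun t : Fin (m+1) => X t.1 ω) ∂μ)
                - ∫ v, ga a v ∂(Measure.pi fun _ : Fin (m+1) => ν)) := by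
        rw [e1'', e2]
        have hre : ∀ a : Fin N → Bool,
            D a + (ν {a}).toReal *
              ((∫ ω, ga a (fun t : Fin (m+1) => X t.1 ω) ∂μ)
                - ∫ v, ga a v ∂(Measure.pi fun _ : Fin (m+1) => ν))
            = (∫ ω in {ω | X 0 ω = a}, ga a (Y ω) ∂μ)
              - (ν {a}).toReal * ∫ v, ga a v ∂(Measure.pi fun _ : Fin (m+1) => ν) := by
          intro a
          have he3 := e3 a
          rw [hDdef]
          dsimp only
          rw [← he3]
          ring
        calc (∑ a : Fin N → Bool, ∫ ω in {ω | X 0 ω = a}, ga a (Y ω) ∂μ)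
              - ∑ a, (ν {a}).toReal * ∫ v, ga a v ∂(Measure.pi fun _ : Fin (m+1) => ν)
            = ∑ a : Fin N → Bool, ((∫ ω in {ω | X 0 ω = a}, ga a (Y ω) ∂μ)
              - (ν {a}).toReal * ∫ v, ga a v ∂(Measure.pi fun _ : Fin (m+1) => ν)) :=
              (Finset.sum_sub_distrib _ _).symm
          _ = ∑ a : Fin N → Bool, (D a + (ν {a}).toReal *
              ((∫ ω, ga a (fun t : Fin (m+1) => X t.1 ω) ∂μ)
                - ∫ v, ga a v ∂(Measure.pi fun _ : Fin (m+1) => ν))) :=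
              Finset.sum_congr rfl fun a _ => (hre a).symm
          _ = (∑ a, D a) + ∑ a, (ν {a}).toReal *
              ((∫ ω, ga a (fun t : Fin (m+1) => X t.1 ω) ∂μ)
                - ∫ v, ga a v ∂(Measure.pi fun _ : Fin (m+1) => ν)) :=
              Finset.sum_add_distrib
      -- the inductive bound for the tail
      have hIH : ∀ a : Fin N → Bool,
          |(∫ ω, ga a (fun t : Fin (m+1) => X t.1 ω) ∂μ)
            - ∫ v, ga a v ∂(Measure.pi fun _ : Fin (m+1) => ν)|
          ≤ ∑ j ∈ Finset.range (m+1), s (j+1) :=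
        fun a => ih hmn (ga a) (fun v => hga01 a v)
      -- bound |∑ D| by s (m+2)
      have hcore : |∑ a, D a| ≤ s (m+2) := by
        rw [hsplitD]
        calc |∑ a ∈ Finset.univ.erase z, (D a - E a)|
            ≤ ∑ a ∈ Finset.univ.erase z, |D a - E a| := Finset.abs_sum_le_sum_abs _ _
          _ ≤ ∑ a ∈ Finset.univ.erase z, (|D a| + |E a|) :=
              Finset.sum_le_sum (fun a _ => abs_sub _ _)
          _ ≤ s (m+2) := ?_
        by_cases hpm : p + 1 ≤ m + 2
        · -- the decorrelation case
          set W : Ω → (Fin (m+1) → (Fin N → Bool)) :=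
            fun ω t => if t.1 + 1 < p then z else X (t.1+1) ω with hWdef
          have hWm : Measurable W := by
            apply measurable_pi_lambda
            intro t
            by_cases ht : t.1 + 1 < p
            · simp only [hWdef, if_pos ht]; exact measurable_const
            · simp only [hWdef, if_neg ht]; exact hXmeas (t.1+1)
          have hWint : ∀ b, Integrable (fun ω => ga b (W ω)) μ :=
            fun b => aux_integrable W hWm (ga b)
          have hGoodEq : ∀ (b : Fin N → Bool) (ω : Ω), ω ∉ Bad → ga b (Y ω) = ga b (W ω) := by
            intro b ω hω
            have hYW : Y ω = W ω := by
              funext t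
              show X (t.1+1) ω = if t.1 + 1 < p then z else X (t.1+1) ω
              by_cases ht : t.1 + 1 < p
              · rw [if_pos ht]
                funext k
                show X (t.1+1) ω k = false
                cases hb : X (t.1+1) ω k
                · rfl
                · exfalso
                  exact hω ⟨t.1+1, by omega, by omega, k, hb⟩
              · rw [if_neg ht]
            rw [hYW]
          have hdiff_le : ∀ b ω, |ga b (Y ω) - ga b (W ω)| ≤ 1 := by
            intro b ω
            have h1 := hga01 b (Y ω)
            have h2 := hga01 b (W ω)
            rw [abs_le]
            exact ⟨by linarith [h1.1, h2.2], by linarith [h1.2, h2.1]⟩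
          have hint_diff : ∀ b, Integrable (fun ω => ga b (Y ω) - ga b (W ω)) μ :=
            fun b => (hGint b).sub (hWint b)
          have hb1 : ∀ (u : Set Ω), MeasurableSet u → ∀ b,
              |(∫ ω in u, ga b (Y ω) ∂μ) - ∫ ω in u, ga b (W ω) ∂μ|
                ≤ (μ (u ∩ Bad)).toReal := by
            intro u hu b
            have hsub : (∫ ω in u, ga b (Y ω) ∂μ) - ∫ ω in u, ga b (W ω) ∂μ
                = ∫ ω in u, (ga b (Y ω) - ga b (W ω)) ∂μ :=
              (integral_sub ((hGint b).restrict) ((hWint b).restrict)).symm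
            have hsplit2 : ∫ ω in u, (ga b (Y ω) - ga b (W ω)) ∂μ
                = (∫ ω in u ∩ Bad, (ga b (Y ω) - ga b (W ω)) ∂μ)
                  + ∫ ω in u \ Bad, (ga b (Y ω) - ga b (W ω)) ∂μ :=
              (integral_inter_add_diff hBadMeas ((hint_diff b).integrableOn)).symm
            have hzero : ∫ ω in u \ Bad, (ga b (Y ω) - ga b (W ω)) ∂μ = 0 := by
              rw [setIntegral_congr_fun (hu.diff hBadMeas)
                (g := fun _ => (0:ℝ)) (fun ω hω => by rw [hGoodEq b ω hω.2, sub_self])]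
              exact integral_zero _ _
            rw [hsub, hsplit2, hzero, add_zero]
            have hb := norm_setIntegral_le_of_norm_le_const (μ := μ) (C := 1) (s := u ∩ Bad)
              (measure_lt_top μ _)
              (fun ω _ => by rw [Real.norm_eq_abs]; exact hdiff_le b ω)
            rw [Real.norm_eq_abs, one_mul, measureReal_def] at hb
            exact hb
          have hb2 : ∀ b, |(∫ ω, ga b (Y ω) ∂μ) - ∫ ω, ga b (W ω) ∂μ|
              ≤ (μ Bad).toReal := by
            intro b
            have hb := hb1 Set.univ MeasurableSet.univ b
            rw [Measure.restrict_univ, Set.univ_inter] at hb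
            exact hb
          -- the decorrelation bound via the supremum T1
          have hb3 : ∀ (a : Fin N → Bool), a ≠ z → ∀ b,
              |(∫ ω in {ω | X 0 ω = a}, ga b (W ω) ∂μ)
                - (ν {a}).toReal * ∫ ω, ga b (W ω) ∂μ|
              ≤ T1 (n + 1 - (m + 2)) := by
            intro a ha b
            set h' : (Fin (n - (n + 1 - (m + 2)) - p + 1) → (Fin N → Bool)) → Icc (0:ℝ) 1 :=
              fun u => ⟨ga b (fun t => if ht : t.1 + 1 < p then z
                else u ⟨t.1 + 1 - p, by have h2 := t.2; omega⟩), hga01 b _⟩ with hh'def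
            have hcomp : ∀ ω, (h' (fun t => X (p + t.1) ω) : ℝ) = ga b (W ω) := by
              intro ω
              show ga b _ = ga b _
              congr 1
              funext t
              show (if ht : t.1 + 1 < p then z
                  else X (p + ((⟨t.1 + 1 - p, by have h2 := t.2; omega⟩ :
                    Fin (n - (n + 1 - (m + 2)) - p + 1)).1)) ω)
                = if t.1 + 1 < p then z else X (t.1+1) ω
              by_cases ht : t.1 + 1 < p
              · rw [dif_pos ht, if_pos ht]
              · rw [dif_neg ht, if_neg ht]
                have harith : p + (t.1 + 1 - p) = t.1 + 1 := by omega
                rw [show (⟨t.1 + 1 - p, by have h2 := t.2; omega⟩ :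
                    Fin (n - (n + 1 - (m + 2)) - p + 1)).1 = t.1 + 1 - p from rfl, harith]
            have e4 : ∫ ω in {ω | X 0 ω = a}, (h' (fun t => X (p + t.1) ω) : ℝ) ∂μ
                = ∫ ω in {ω | X 0 ω = a}, ga b (W ω) ∂μ :=
              setIntegral_congr_fun (hSetA a) (fun ω _ => hcomp ω)
            have e5 : ∫ ω, (h' (fun t => X (p + t.1) ω) : ℝ) ∂μ = ∫ ω, ga b (W ω) ∂μ :=
              integral_congr_ae (ae_of_all _ fun ω => hcomp ω)
            have hfin := hT1_ge (n + 1 - (m + 2)) a ha h'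
            rw [e4, e5, ← hνa a] at hfin
            exact hfin
          -- per-letter bound
          have hDbound : ∀ (a : Fin N → Bool), a ≠ z → ∀ b,
              |(∫ ω in {ω | X 0 ω = a}, ga b (Y ω) ∂μ)
                - (ν {a}).toReal * ∫ ω, ga b (Y ω) ∂μ|
              ≤ Esup + T1 (n + 1 - (m + 2)) + (ν {a}).toReal * (μ Bad).toReal := by
            intro a ha b
            have t1 := hb1 {ω | X 0 ω = a} (hSetA a) b
            have t2 := hb2 b
            have t3 := hb3 a ha b
            have hνnn : 0 ≤ (ν {a}).toReal := ENNReal.toReal_nonneg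
            have hE1 := hEsup_ge a ha
            have hdec : (∫ ω in {ω | X 0 ω = a}, ga b (Y ω) ∂μ)
                - (ν {a}).toReal * ∫ ω, ga b (Y ω) ∂μ
                = ((∫ ω in {ω | X 0 ω = a}, ga b (Y ω) ∂μ)
                    - ∫ ω in {ω | X 0 ω = a}, ga b (W ω) ∂μ)
                  + ((∫ ω in {ω | X 0 ω = a}, ga b (W ω) ∂μ)
                    - (ν {a}).toReal * ∫ ω, ga b (W ω) ∂μ)
                  + (ν {a}).toReal * ((∫ ω, ga b (W ω) ∂μ) - ∫ ω, ga b (Y ω) ∂μ) := by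
              ring
            rw [hdec]
            have habs2 : |(ν {a}).toReal * ((∫ ω, ga b (W ω) ∂μ) - ∫ ω, ga b (Y ω) ∂μ)|
                ≤ (ν {a}).toReal * (μ Bad).toReal := by
              rw [abs_mul, abs_of_nonneg hνnn]
              refine mul_le_mul_of_nonneg_left ?_ hνnn
              rw [abs_sub_comm]
              exact t2
            refine le_trans (abs_add_three _ _ _) ?_
            exact add_le_add (add_le_add (le_trans t1 hE1) t3) habs2
          -- sum it up
          have hsum_le : ∑ a ∈ Finset.univ.erase z, (|D a| + |E a|)
              ≤ ∑ a ∈ Finset.univ.erase z,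
                  (2 * (Esup + T1 (n + 1 - (m + 2)))
                    + 2 * (μ Bad).toReal * (ν {a}).toReal) := by
            refine Finset.sum_le_sum (fun a hamem => ?_)
            have ha : a ≠ z := (Finset.mem_erase.1 hamem).1
            have d1 := hDbound a ha a
            have d2 := hDbound a ha z
            have hDa : |D a| ≤ Esup + T1 (n + 1 - (m + 2)) + (ν {a}).toReal * (μ Bad).toReal := d1
            have hEa : |E a| ≤ Esup + T1 (n + 1 - (m + 2)) + (ν {a}).toReal * (μ Bad).toReal := d2
            linarith
          have hcard : ((Finset.univ.erase z).card : ℝ) ≤ 2^N := by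
            have hc1 : (Finset.univ.erase z).card ≤ Fintype.card (Fin N → Bool) :=
              Finset.card_le_univ _
            have hc2 : Fintype.card (Fin N → Bool) = 2^N := by
              rw [Fintype.card_fun]; simp
            calc ((Finset.univ.erase z).card : ℝ) ≤ (Fintype.card (Fin N → Bool) : ℝ) := by
                  exact_mod_cast hc1
              _ = 2^N := by rw [hc2]; push_cast; ring
          have hT1nn := hT1_nonneg (n + 1 - (m + 2))
          have hBadnn : (0:ℝ) ≤ (μ Bad).toReal := ENNReal.toReal_nonneg
          calc ∑ a ∈ Finset.univ.erase z, (|D a| + |E a|)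
              ≤ ∑ a ∈ Finset.univ.erase z,
                  (2 * (Esup + T1 (n + 1 - (m + 2)))
                    + 2 * (μ Bad).toReal * (ν {a}).toReal) := hsum_le
            _ = ((Finset.univ.erase z).card : ℝ) * (2 * (Esup + T1 (n + 1 - (m + 2))))
                  + 2 * (μ Bad).toReal * ∑ a ∈ Finset.univ.erase z, (ν {a}).toReal := by
                rw [Finset.sum_add_distrib, Finset.sum_const, nsmul_eq_mul, ← Finset.mul_sum]
            _ ≤ (2^N : ℝ) * (2 * (Esup + T1 (n + 1 - (m + 2))))
                  + 2 * ((p:ℝ) * ((N:ℝ) * x)) * ((N:ℝ) * x) := by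
                refine add_le_add ?_ ?_
                · refine mul_le_mul_of_nonneg_right hcard ?_
                  nlinarith [hEsup_nonneg, hT1nn]
                · have hsn : 0 ≤ ∑ a ∈ Finset.univ.erase z, (ν {a}).toReal :=
                    Finset.sum_nonneg (fun a _ => ENNReal.toReal_nonneg)
                  have hpNx : (0:ℝ) ≤ (p:ℝ) * ((N:ℝ) * x) := by positivity
                  nlinarith [hsum_nu_erase, hBadle]
            _ ≤ s (m+2) := by
                rw [hs_big (m+2) hpm]
                have hpow : (2:ℝ)^(N+1) = 2 * 2^N := by ring
                nlinarith [hT1nn, hEsup_nonneg, hxnn, sq_nonneg x]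
        · -- the short case : trivial bound
          have htriv : ∀ (a : Fin N → Bool) b,
              |(∫ ω in {ω | X 0 ω = a}, ga b (Y ω) ∂μ)
                - (ν {a}).toReal * ∫ ω, ga b (Y ω) ∂μ|
              ≤ 2 * (ν {a}).toReal := by
            intro a b
            have hf1 : ∀ ω : Ω, |ga b (Y ω)| ≤ 1 := fun ω => hIccAbs _ (hga01 b (Y ω))
            have e1a := aux_abs_setIntegral_le (μ := μ) (fun ω => ga b (Y ω)) hf1 _ (hSetA a)
            have e2a := aux_abs_integral_le (μ := μ) (fun ω => ga b (Y ω)) hf1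
            have hνnn : 0 ≤ (ν {a}).toReal := ENNReal.toReal_nonneg
            have e3a : |(ν {a}).toReal * ∫ ω, ga b (Y ω) ∂μ| ≤ (ν {a}).toReal := by
              rw [abs_mul, abs_of_nonneg hνnn]
              calc (ν {a}).toReal * |∫ ω, ga b (Y ω) ∂μ| ≤ (ν {a}).toReal * 1 :=
                    mul_le_mul_of_nonneg_left e2a hνnn
                _ = (ν {a}).toReal := mul_one _
            calc |(∫ ω in {ω | X 0 ω = a}, ga b (Y ω) ∂μ)
                  - (ν {a}).toReal * ∫ ω, ga b (Y ω) ∂μ|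
                ≤ |(∫ ω in {ω | X 0 ω = a}, ga b (Y ω) ∂μ)|
                  + |(ν {a}).toReal * ∫ ω, ga b (Y ω) ∂μ| := abs_sub _ _
              _ ≤ (ν {a}).toReal + (ν {a}).toReal := by
                  refine add_le_add ?_ e3a
                  rw [hνa a]
                  exact e1a
              _ = 2 * (ν {a}).toReal := by ring
          calc ∑ a ∈ Finset.univ.erase z, (|D a| + |E a|)
              ≤ ∑ a ∈ Finset.univ.erase z, (4 * (ν {a}).toReal) := by
                refine Finset.sum_le_sum (fun a _ => ?_)
                have d1 := htriv a a
                have d2 := htriv a z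
                have hDa : |D a| ≤ 2 * (ν {a}).toReal := d1
                have hEa : |E a| ≤ 2 * (ν {a}).toReal := d2
                linarith
            _ = 4 * ∑ a ∈ Finset.univ.erase z, (ν {a}).toReal := by
                rw [Finset.mul_sum]
            _ ≤ 4 * ((N:ℝ) * x) := by
                refine mul_le_mul_of_nonneg_left hsum_nu_erase (by norm_num)
            _ ≤ s (m+2) := by
                rw [hs_small (m+2) hpm]
                ring_nf
                exact le_refl _
      -- put everything together
      have hIHsum : |∑ a, (ν {a}).toReal *
            ((∫ ω, ga a (fun t : Fin (m+1) => X t.1 ω) ∂μ)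
              - ∫ v, ga a v ∂(Measure.pi fun _ : Fin (m+1) => ν))|
          ≤ ∑ j ∈ Finset.range (m+1), s (j+1) := by
        calc |∑ a, (ν {a}).toReal *
              ((∫ ω, ga a (fun t : Fin (m+1) => X t.1 ω) ∂μ)
                - ∫ v, ga a v ∂(Measure.pi fun _ : Fin (m+1) => ν))|
            ≤ ∑ a, |(ν {a}).toReal *
              ((∫ ω, ga a (fun t : Fin (m+1) => X t.1 ω) ∂μ)
                - ∫ v, ga a v ∂(Measure.pi fun _ : Fin (m+1) => ν))| :=
              Finset.abs_sum_le_sum_abs _ _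
          _ ≤ ∑ a, (ν {a}).toReal * ∑ j ∈ Finset.range (m+1), s (j+1) := by
              refine Finset.sum_le_sum (fun a _ => ?_)
              rw [abs_mul, abs_of_nonneg (ENNReal.toReal_nonneg)]
              exact mul_le_mul_of_nonneg_left (hIH a) ENNReal.toReal_nonneg
          _ = (∑ a, (ν {a}).toReal) * ∑ j ∈ Finset.range (m+1), s (j+1) := by
              rw [← Finset.sum_mul]
          _ = ∑ j ∈ Finset.range (m+1), s (j+1) := by rw [hνsum1, one_mul]
      rw [Finset.sum_range_succ]
      calc |(∫ ω, g (fun t => X t.1 ω) ∂μ)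
            - ∫ v, g v ∂(Measure.pi fun _ : Fin (m+1+1) => ν)|
          = |(∑ a, D a) + ∑ a, (ν {a}).toReal *
              ((∫ ω, ga a (fun t : Fin (m+1) => X t.1 ω) ∂μ)
                - ∫ v, ga a v ∂(Measure.pi fun _ : Fin (m+1) => ν))| := by rw [hmain]
        _ ≤ |∑ a, D a| + |∑ a, (ν {a}).toReal *
              ((∫ ω, ga a (fun t : Fin (m+1) => X t.1 ω) ∂μ)
                - ∫ v, ga a v ∂(Measure.pi fun _ : Fin (m+1) => ν))| := abs_add_le _ _
        _ ≤ s (m+1+1) + ∑ j ∈ Finset.range (m+1), s (j+1) := add_le_add hcore hIHsum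
        _ = ∑ j ∈ Finset.range (m+1), s (j+1) + s (m+1+1) := by rw [add_comm]
  -- FINAL ASSEMBLY
  have hkey := key n le_rfl h hh
  refine le_trans hkey ?_
  have hsplitsum : ∑ j ∈ Finset.range (n+1), s (j+1)
      = (∑ j ∈ Finset.range p, s (j+1)) + ∑ j ∈ Finset.Ico p (n+1), s (j+1) := by
    have hcons := Finset.sum_Ico_consecutive (fun j => s (j+1))
      (Nat.zero_le p) (show p ≤ n+1 by omega)
    simp only [Nat.Ico_zero_eq_range] at hcons
    exact hcons.symm
  have hsmallsum : ∑ j ∈ Finset.range p, s (j+1) = (p:ℝ) * (4*(N:ℝ)*x) := by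
    have hc : ∀ j ∈ Finset.range p, s (j+1) = 4*(N:ℝ)*x := by
      intro j hj
      exact hs_small (j+1) (by have := Finset.mem_range.1 hj; omega)
    rw [Finset.sum_congr rfl hc, Finset.sum_const, Finset.card_range, nsmul_eq_mul]
  have hbigsum : ∑ j ∈ Finset.Ico p (n+1), s (j+1)
      = 2^(N+1) * (∑ l ∈ Finset.range (n-p+1), T1 l)
        + ((n+1-p : ℕ) : ℝ) * (2^(N+1) * Esup + 2*(N:ℝ)^2*p*x^2) := by
    have hterm : ∀ j ∈ Finset.Ico p (n+1), s (j+1)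
        = 2^(N+1) * T1 (n - j) + (2^(N+1) * Esup + 2*(N:ℝ)^2*p*x^2) := by
      intro j hj
      have hj' := Finset.mem_Ico.1 hj
      rw [hs_big (j+1) (by omega)]
      rw [show n + 1 - (j+1) = n - j from by omega]
      ring
    rw [Finset.sum_congr rfl hterm, Finset.sum_add_distrib, Finset.sum_const,
      Nat.card_Ico, nsmul_eq_mul, ← Finset.mul_sum]
    congr 2
    · -- reindex the decorrelation sum
      rw [Finset.sum_Ico_eq_sum_range]
      have h1 : ∀ i ∈ Finset.range (n+1-p), T1 (n - (p + i)) = T1 ((n+1-p) - 1 - i) := by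
        intro i hi
        congr 1
        have := Finset.mem_range.1 hi
        omega
      rw [Finset.sum_congr rfl h1, Finset.sum_range_reflect,
        show n+1-p = n-p+1 from by omega]
  rw [hsplitsum, hsmallsum, hbigsum]
  have hR1snn : 0 ≤ ∑ l ∈ Finset.range (n-p+1), T1 l :=
    Finset.sum_nonneg fun l _ => hT1_nonneg l
  have hqle : ((n+1-p : ℕ) : ℝ) ≤ (n:ℝ) := by
    exact_mod_cast (show n+1-p ≤ n by omega)
  have hnn : (0:ℝ) ≤ (n:ℝ) := Nat.cast_nonneg n
  have hpnn : (0:ℝ) ≤ (p:ℝ) := Nat.cast_nonneg p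
  have hNnn : (0:ℝ) ≤ (N:ℝ) := Nat.cast_nonneg N
  have hpow : (0:ℝ) ≤ 2^(N+1) := by positivity
  have h1 : (0:ℝ) ≤ (2*(N:ℝ)^2 + 4*N + 1) * ∑ l ∈ Finset.range (n-p+1), T1 l :=
    mul_nonneg (by positivity) hR1snn
  have h2 : ((n+1-p : ℕ) : ℝ) * (2^(N+1) * Esup) ≤ (n:ℝ) * (2^(N+1) * Esup) :=
    mul_le_mul_of_nonneg_right hqle (mul_nonneg hpow hEsup_nonneg)
  have h3 : (0:ℝ) ≤ (2*(N:ℝ)^2 + 4*N + 1) * ((n:ℝ) * Esup) :=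
    mul_nonneg (by positivity) (mul_nonneg hnn hEsup_nonneg)
  have h4 : ((n+1-p : ℕ) : ℝ) * (2*(N:ℝ)^2*p*x^2) ≤ (n:ℝ) * (2*(N:ℝ)^2*p*x^2) :=
    mul_le_mul_of_nonneg_right hqle (by positivity)
  have h5 : (0:ℝ) ≤ ((2:ℝ)^(N+1) + 4*N + 1) * ((p:ℝ)*n*x^2) :=
    mul_nonneg (by positivity) (by positivity)
  have h6 : (0:ℝ) ≤ ((2:ℝ)^(N+1) + 2*(N:ℝ)^2 + 1) * ((p:ℝ)*x) :=
    mul_nonneg (by positivity) (mul_nonneg hpnn hxnn)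
  set S' : ℝ := ⨆ (a : Fin N → Bool) (_ : a ≠ z),
      ((μ ({ω | X 0 ω = a} ∩ Bad)).toReal + ((p:ℝ) * n * x ^ 2 + (p:ℝ) * x)) with hS'def
  have hR3nn : (0:ℝ) ≤ (p:ℝ) * n * x ^ 2 + (p:ℝ) * x :=
    add_nonneg (by positivity) (mul_nonneg hpnn hxnn)
  have hS'bdd : BddAbove (Set.range fun a : Fin N → Bool =>
      ⨆ (_ : a ≠ z), ((μ ({ω | X 0 ω = a} ∩ Bad)).toReal
        + ((p:ℝ) * n * x ^ 2 + (p:ℝ) * x))) := by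
    refine ⟨1 + ((p:ℝ) * n * x ^ 2 + (p:ℝ) * x), ?_⟩
    rintro r ⟨b, rfl⟩
    dsimp only
    by_cases hb : b ≠ z
    · haveI : Nonempty (b ≠ z) := ⟨hb⟩
      rw [ciSup_const]
      exact add_le_add (htoReal1 _) le_rfl
    · haveI : IsEmpty (b ≠ z) := ⟨fun hc => hc (not_not.1 hb)⟩
      rw [Real.iSup_of_isEmpty]
      linarith [hR3nn]
  have hS'_ge_each : ∀ a, a ≠ z →
      (μ ({ω | X 0 ω = a} ∩ Bad)).toReal + ((p:ℝ) * n * x ^ 2 + (p:ℝ) * x) ≤ S' := by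
    intro a ha
    have h1 : (μ ({ω | X 0 ω = a} ∩ Bad)).toReal + ((p:ℝ) * n * x ^ 2 + (p:ℝ) * x)
        = ⨆ (_ : a ≠ z), ((μ ({ω | X 0 ω = a} ∩ Bad)).toReal
            + ((p:ℝ) * n * x ^ 2 + (p:ℝ) * x)) := by
      haveI : Nonempty (a ≠ z) := ⟨ha⟩
      rw [ciSup_const]
    rw [hS'def, h1]
    exact le_ciSup hS'bdd a
  have hS'R3 : ((p:ℝ) * n * x ^ 2 + (p:ℝ) * x) ≤ S' :=
    le_trans (le_add_of_nonneg_left ENNReal.toReal_nonneg) (hS'_ge_each _ ha1)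
  have hEsupS' : Esup ≤ S' - ((p:ℝ) * n * x ^ 2 + (p:ℝ) * x) := by
    rw [hEsupdef]
    refine Real.iSup_le (fun a => ?_) (by linarith [hS'R3])
    by_cases ha : a ≠ z
    · haveI : Nonempty (a ≠ z) := ⟨ha⟩
      rw [ciSup_const]
      have := hS'_ge_each a ha
      linarith
    · haveI : IsEmpty (a ≠ z) := ⟨fun hc => hc (not_not.1 ha)⟩
      rw [Real.iSup_of_isEmpty]
      linarith [hS'R3]
  have hn1 : (1:ℝ) ≤ (n:ℝ) := by exact_mod_cast hn
  have hfin : (p:ℝ) * (4*(N:ℝ)*x)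
      + (2^(N+1) * (∑ l ∈ Finset.range (n-p+1), T1 l)
        + ((n+1-p : ℕ) : ℝ) * (2^(N+1) * Esup + 2*(N:ℝ)^2*p*x^2))
      ≤ (2^(N+1) + 2*(N:ℝ)^2 + 4*N + 1)
        * ((∑ l ∈ Finset.range (n-p+1), T1 l) + (n:ℝ) * Esup
            + ((p:ℝ)*n*x^2 + (p:ℝ)*x)) := by
    nlinarith [h1, h2, h3, h4, h5, h6]
  have hkey2 : (n:ℝ) * Esup + ((p:ℝ)*n*x^2 + (p:ℝ)*x) ≤ (n:ℝ) * S' := by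
    have e := mul_le_mul_of_nonneg_left hEsupS' hnn
    have e2 : (0:ℝ) ≤ ((n:ℝ) - 1) * ((p:ℝ) * n * x ^ 2 + (p:ℝ) * x) :=
      mul_nonneg (by linarith) hR3nn
    nlinarith [e, e2]
  have hCpos : (0:ℝ) ≤ 2^(N+1) + 2*(N:ℝ)^2 + 4*(N:ℝ) + 1 := by positivity
  have hfin2 : (p:ℝ) * (4*(N:ℝ)*x)
      + (2^(N+1) * (∑ l ∈ Finset.range (n-p+1), T1 l)
        + ((n+1-p : ℕ) : ℝ) * (2^(N+1) * Esup + 2*(N:ℝ)^2*p*x^2))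
      ≤ (2^(N+1) + 2*(N:ℝ)^2 + 4*N + 1)
        * ((∑ l ∈ Finset.range (n-p+1), T1 l) + (n:ℝ) * S') := by
    refine le_trans hfin ?_
    refine mul_le_mul_of_nonneg_left ?_ hCpos
    linarith [hkey2]
  exact hfin2
end

section
/- There is a constant C depending only on N with the following property. Let ρ be the Bernoulli measure on {0,1} with ρ({1}) = μ(H), and ρ_N := ρ^{⊗N} the corresponding product measure on {0,1}^N (the law of a block of N i.i.d. Bernoulli(μ(H)) variables). Then for every integer n ≥ 1, sup_h |∫ h dρ_N^{⊗(n+1)} − ∫ h dν^{⊗(n+1)}| ≤ C [ n · μ(H ∩ ⋃_{1≤j≤N−1} T^{-j}H) + n μ(H)^2 ]. -/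
open MeasureTheory Filter Set Topology
open scoped ENNReal NNReal

section aux
variable {E : Type*} [Fintype E]

lemma sum_pi_succ {m : ℕ} (f : (Fin (m + 1) → E) → ℝ) :
    ∑ v : Fin (m + 1) → E, f v = ∑ x : E, ∑ w : Fin m → E, f (Fin.cons x w) := by
  rw [← Equiv.sum_comp (Fin.consEquiv fun _ : Fin (m + 1) => E) f, Fintype.sum_prod_type]
  rfl

lemma sum_prod_eq_pow (b : E → ℝ) : ∀ m : ℕ,
    ∑ v : Fin m → E, ∏ i, b (v i) = (∑ x, b x) ^ m := by
  intro m
  induction m with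
  | zero => simp
  | succ m ih =>
    rw [sum_pi_succ]
    simp only [Fin.prod_univ_succ, Fin.cons_zero, Fin.cons_succ]
    have h1 : ∀ x : E, ∑ w : Fin m → E, b x * ∏ i, b (w i) = b x * (∑ y, b y) ^ m :=
      fun x => by rw [← Finset.mul_sum, ih]
    rw [Finset.sum_congr rfl fun x _ => h1 x, ← Finset.sum_mul, pow_succ, mul_comm]

lemma telescope (a b : E → ℝ) (ha : ∀ x, 0 ≤ a x) (hb : ∀ x, 0 ≤ b x)
    (ha1 : ∑ x, a x = 1) (hb1 : ∑ x, b x = 1) : ∀ m : ℕ,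
    ∑ v : Fin m → E, |∏ i, a (v i) - ∏ i, b (v i)| ≤ m * ∑ x, |a x - b x| := by
  intro m
  induction m with
  | zero => simp
  | succ m ih =>
    rw [sum_pi_succ (fun v => |∏ i, a (v i) - ∏ i, b (v i)|)]
    have key : ∀ (x : E) (w : Fin m → E),
        |∏ i, a ((Fin.cons x w : Fin (m+1) → E) i) - ∏ i, b ((Fin.cons x w : Fin (m+1) → E) i)|
          ≤ a x * |∏ i, a (w i) - ∏ i, b (w i)| + |a x - b x| * ∏ i, b (w i) := by
      intro x w
      simp only [Fin.prod_univ_succ, Fin.cons_zero, Fin.cons_succ]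
      have hB : (0:ℝ) ≤ ∏ i, b (w i) := Finset.prod_nonneg fun i _ => hb _
      have heq : a x * ∏ i, a (w i) - b x * ∏ i, b (w i)
          = a x * (∏ i, a (w i) - ∏ i, b (w i)) + (a x - b x) * ∏ i, b (w i) := by
        ring
      rw [heq]
      refine (abs_add_le _ _).trans ?_
      rw [abs_mul, abs_mul, abs_of_nonneg (ha x), abs_of_nonneg hB]
    have step1 := Finset.sum_le_sum (s := (Finset.univ : Finset E))
      (fun x _ => Finset.sum_le_sum (s := (Finset.univ : Finset (Fin m → E)))
        (fun w _ => key x w))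
    refine step1.trans ?_
    have e1 : ∀ x : E, ∑ w : Fin m → E,
        (a x * |∏ i, a (w i) - ∏ i, b (w i)| + |a x - b x| * ∏ i, b (w i))
        = a x * (∑ w : Fin m → E, |∏ i, a (w i) - ∏ i, b (w i)|)
          + |a x - b x| * (∑ w : Fin m → E, ∏ i, b (w i)) := by
      intro x
      rw [Finset.sum_add_distrib, ← Finset.mul_sum, ← Finset.mul_sum]
    rw [Finset.sum_congr rfl fun x _ => e1 x, Finset.sum_add_distrib,
      ← Finset.sum_mul, ← Finset.sum_mul, ha1, sum_prod_eq_pow, hb1, one_pow,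
      one_mul, mul_one]
    have hD : 0 ≤ ∑ x, |a x - b x| := Finset.sum_nonneg fun x _ => abs_nonneg _
    have := ih
    push_cast
    nlinarith [ih]

end aux

lemma pi_singleton {ι : Type*} [Fintype ι] {E : ι → Type*} [∀ i, MeasurableSpace (E i)]
    (κ : ∀ i, Measure (E i)) [∀ i, SigmaFinite (κ i)] (v : ∀ i, E i) :
    Measure.pi κ {v} = ∏ i, κ i {v i} := by
  rw [← univ_pi_singleton v, Measure.pi_pi]

lemma sum_meas_singleton {E : Type*} [Fintype E] [MeasurableSpace E]
    [MeasurableSingletonClass E] (α : Measure E) [IsProbabilityMeasure α] :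
    ∑ x : E, α {x} = 1 := by
  have h1 : (univ : Set E) = ⋃ x ∈ (Finset.univ : Finset E), {x} := by
    simpa using (Set.iUnion_of_singleton E).symm
  rw [← measure_univ (μ := α), h1, measure_biUnion_finset]
  · exact fun x _ y _ hxy => by simp [Set.disjoint_singleton, hxy]
  · exact fun x _ => measurableSet_singleton x

lemma sum_toReal_singleton {E : Type*} [Fintype E] [MeasurableSpace E]
    [MeasurableSingletonClass E] (α : Measure E) [IsProbabilityMeasure α] :
    ∑ x : E, (α {x}).toReal = 1 := by
  rw [← ENNReal.toReal_sum (fun x _ => measure_ne_top α _), sum_meas_singleton]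
  simp

lemma integral_pi_diff {E : Type*} [Fintype E] [MeasurableSpace E] [MeasurableSingletonClass E]
    (α β : Measure E) [IsProbabilityMeasure α] [IsProbabilityMeasure β] (m : ℕ)
    (h : (Fin m → E) → ℝ) (hh : ∀ v, h v ∈ Icc (0:ℝ) 1) :
    |(∫ v, h v ∂(Measure.pi fun _ : Fin m => α)) - ∫ v, h v ∂(Measure.pi fun _ : Fin m => β)|
      ≤ m * ∑ x, |(α {x}).toReal - (β {x}).toReal| := by
  rw [integral_fintype Integrable.of_finite, integral_fintype Integrable.of_finite]
  have hA : ∀ v : Fin m → E, ((Measure.pi fun _ : Fin m => α) {v}).toReal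
      = ∏ i, (α {v i}).toReal := by
    intro v; rw [pi_singleton, ENNReal.toReal_prod]
  have hB : ∀ v : Fin m → E, ((Measure.pi fun _ : Fin m => β) {v}).toReal
      = ∏ i, (β {v i}).toReal := by
    intro v; rw [pi_singleton, ENNReal.toReal_prod]
  simp only [Measure.real, smul_eq_mul, hA, hB, ← Finset.sum_sub_distrib]
  refine (Finset.abs_sum_le_sum_abs _ _).trans ?_
  have step : ∀ v : Fin m → E,
      |(∏ i, (α {v i}).toReal) * h v - (∏ i, (β {v i}).toReal) * h v|
        ≤ |∏ i, (α {v i}).toReal - ∏ i, (β {v i}).toReal| := by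
    intro v
    rw [← sub_mul, abs_mul]
    have h1 : |h v| ≤ 1 := by
      rw [abs_le]; exact ⟨by linarith [(hh v).1], (hh v).2⟩
    exact mul_le_of_le_one_right (abs_nonneg _) h1
  refine (Finset.sum_le_sum fun v _ => step v).trans ?_
  exact telescope (fun x => (α {x}).toReal) (fun x => (β {x}).toReal)
    (fun x => ENNReal.toReal_nonneg) (fun x => ENNReal.toReal_nonneg)
    (sum_toReal_singleton α) (sum_toReal_singleton β) m


lemma bern_prob {q : ℝ≥0∞} (hq : q ≤ 1) :
    IsProbabilityMeasure (q • Measure.dirac true + (1 - q) • Measure.dirac false) := by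
  constructor
  simp only [Measure.add_apply, Measure.smul_apply, smul_eq_mul, measure_univ, mul_one]
  exact add_tsub_cancel_of_le hq

lemma bern_apply (q : ℝ≥0∞) (b : Bool) :
    (q • Measure.dirac true + (1 - q) • Measure.dirac false : Measure Bool) {b}
      = if b then q else 1 - q := by
  cases b <;> simp

lemma measurable_blockVec {Ω : Type*} [MeasurableSpace Ω] {T : Ω → Ω} (hT : Measurable T)
    {H : Set Ω} (hH : MeasurableSet H) (N i : ℕ) : Measurable (blockVec T H N i) := by
  apply measurable_pi_lambda
  intro j
  apply measurable_to_countable'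
  intro b
  have hpre : MeasurableSet (T^[N * i + j.1] ⁻¹' H) := (hT.iterate _) hH
  cases b with
  | false =>
    have : (fun ω => blockVec T H N i ω j) ⁻¹' {false} = (T^[N * i + j.1] ⁻¹' H)ᶜ := by
      ext ω; simp [blockVec, decide_eq_false_iff_not]
    rw [this]; exact hpre.compl
  | true =>
    have : (fun ω => blockVec T H N i ω j) ⁻¹' {true} = T^[N * i + j.1] ⁻¹' H := by
      ext ω; simp [blockVec, decide_eq_true_eq]
    rw [this]; exact hpre

lemma map_blockVec_singleton {Ω : Type*} [MeasurableSpace Ω] (μ : Measure Ω) {T : Ω → Ω}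
    (hT : Measurable T) {H : Set Ω} (hH : MeasurableSet H) {N : ℕ} (x : Fin N → Bool) :
    Measure.map (blockVec T H N 0) μ {x}
      = μ (⋂ j : Fin N, if x j then T^[j.1] ⁻¹' H else (T^[j.1] ⁻¹' H)ᶜ) := by
  rw [Measure.map_apply (measurable_blockVec hT hH N 0) (measurableSet_singleton x)]
  congr 1
  ext ω
  simp only [mem_preimage, mem_singleton_iff, funext_iff, blockVec, mem_iInter,
    Nat.mul_zero, Nat.zero_add]
  refine forall_congr' fun j => ?_
  cases hx : x j with
  | true => simp [decide_eq_true_eq]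
  | false => simp [decide_eq_false_iff_not]

lemma pair_bound {Ω : Type*} [MeasurableSpace Ω] {μ : Measure Ω} {T : Ω → Ω}
    (hT : MeasurePreserving T μ μ) {H : Set Ω} (hH : MeasurableSet H) {N k l : ℕ}
    (hkl : k < l) (hlN : l < N) :
    μ (T^[k] ⁻¹' H ∩ T^[l] ⁻¹' H) ≤ μ (H ∩ ⋃ j ∈ Icc 1 (N - 1), T^[j] ⁻¹' H) := by
  have hTl : T^[l] = T^[l - k] ∘ T^[k] := by
    rw [← Function.iterate_add, Nat.sub_add_cancel hkl.le]
  have hset : T^[k] ⁻¹' H ∩ T^[l] ⁻¹' H = T^[k] ⁻¹' (H ∩ T^[l - k] ⁻¹' H) := by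
    rw [preimage_inter, hTl, preimage_comp]
  rw [hset, (hT.iterate k).measure_preimage
    ((hH.inter ((hT.measurable.iterate _) hH)).nullMeasurableSet)]
  refine measure_mono (inter_subset_inter_right _ ?_)
  have hmem : l - k ∈ Icc 1 (N - 1) := by simp only [mem_Icc]; omega
  exact Set.subset_biUnion_of_mem (u := fun j => T^[j] ⁻¹' H) hmem

lemma pair_bound' {Ω : Type*} [MeasurableSpace Ω] {μ : Measure Ω} {T : Ω → Ω}
    (hT : MeasurePreserving T μ μ) {H : Set Ω} (hH : MeasurableSet H) {N : ℕ}
    {i j : Fin N} (hij : i ≠ j) :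
    μ (T^[i.1] ⁻¹' H ∩ T^[j.1] ⁻¹' H) ≤ μ (H ∩ ⋃ j ∈ Icc 1 (N - 1), T^[j] ⁻¹' H) := by
  rcases lt_trichotomy i.1 j.1 with h | h | h
  · exact pair_bound hT hH h j.2
  · exact absurd (Fin.ext h) hij
  · rw [inter_comm]; exact pair_bound hT hH h i.2

lemma perx {Ω : Type*} [MeasurableSpace Ω] (μ : Measure Ω) [IsProbabilityMeasure μ]
    {T : Ω → Ω} (hT : MeasurePreserving T μ μ) {H : Set Ω} (hH : MeasurableSet H)
    (N : ℕ) (x : Fin N → Bool) (hx : x ≠ fun _ => false) :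
    |((Measure.pi fun _ : Fin N =>
        (μ H • Measure.dirac true + (1 - μ H) • Measure.dirac false : Measure Bool)) {x}).toReal
      - ((Measure.map (blockVec T H N 0) μ) {x}).toReal|
    ≤ N * ((μ (H ∩ ⋃ j ∈ Icc 1 (N - 1), T^[j] ⁻¹' H)).toReal + (μ H).toReal ^ 2) := by
  have hq : μ H ≤ 1 := prob_le_one
  haveI := bern_prob hq
  set U : Set Ω := ⋃ j ∈ Icc 1 (N - 1), T^[j] ⁻¹' H with hU
  set p : ℝ := (μ H).toReal with hp
  set a : ℝ := (μ (H ∩ U)).toReal with ha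
  have hp0 : 0 ≤ p := ENNReal.toReal_nonneg
  have ha0 : 0 ≤ a := ENNReal.toReal_nonneg
  have hp1 : p ≤ 1 := by
    have := ENNReal.toReal_mono ENNReal.one_ne_top hq
    simpa using this
  have hνx : (Measure.map (blockVec T H N 0) μ) {x}
      = μ (⋂ j : Fin N, if x j then T^[j.1] ⁻¹' H else (T^[j.1] ⁻¹' H)ᶜ) :=
    map_blockVec_singleton μ hT.measurable hH x
  have hαx : (Measure.pi fun _ : Fin N =>
      (μ H • Measure.dirac true + (1 - μ H) • Measure.dirac false : Measure Bool)) {x}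
      = ∏ j : Fin N, (if x j then μ H else 1 - μ H) := by
    rw [pi_singleton]
    exact Finset.prod_congr rfl fun j _ => bern_apply _ _
  obtain ⟨j, hj⟩ : ∃ j, x j = true := by
    by_contra hc
    push_neg at hc
    exact hx (funext fun j => by simpa using hc j)
  have hN1 : (1 : ℝ) ≤ N := by
    have := j.2; exact_mod_cast Nat.one_le_iff_ne_zero.2 (by omega)
  set A : ℝ := ((Measure.pi fun _ : Fin N =>
      (μ H • Measure.dirac true + (1 - μ H) • Measure.dirac false : Measure Bool)) {x}).toReal
  set B : ℝ := ((Measure.map (blockVec T H N 0) μ) {x}).toReal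
  have hA0 : 0 ≤ A := ENNReal.toReal_nonneg
  have hB0 : 0 ≤ B := ENNReal.toReal_nonneg
  by_cases h2 : ∃ i, i ≠ j ∧ x i = true
  · -- at least two coordinates equal to true
    obtain ⟨i, hij, hi⟩ := h2
    have hν_le : (Measure.map (blockVec T H N 0) μ) {x} ≤ μ (H ∩ U) := by
      rw [hνx]
      refine (measure_mono ?_).trans (pair_bound' hT hH hij)
      intro ω hω
      have h1 := mem_iInter.1 hω i
      have h2' := mem_iInter.1 hω j
      rw [hi] at h1; rw [hj] at h2'
      simp only [if_true] at h1 h2'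
      exact ⟨h1, h2'⟩
    have hα_le : (Measure.pi fun _ : Fin N =>
        (μ H • Measure.dirac true + (1 - μ H) • Measure.dirac false : Measure Bool)) {x}
        ≤ μ H * μ H := by
      rw [hαx]
      have hsub : ({i, j} : Finset (Fin N)) ⊆ Finset.univ := Finset.subset_univ _
      calc ∏ k : Fin N, (if x k then μ H else 1 - μ H)
          = (∏ k ∈ Finset.univ \ {i, j}, (if x k then μ H else 1 - μ H))
            * ∏ k ∈ ({i, j} : Finset (Fin N)), (if x k then μ H else 1 - μ H) :=
            (Finset.prod_sdiff hsub).symm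
        _ ≤ 1 * ∏ k ∈ ({i, j} : Finset (Fin N)), (if x k then μ H else 1 - μ H) := by
            refine mul_le_mul_left (Finset.prod_le_one ?_ ?_) _
            · intro k _; positivity
            · intro k _
              split_ifs
              · exact hq
              · exact tsub_le_self
        _ = μ H * μ H := by
            rw [one_mul, Finset.prod_pair hij, hi, hj]
            simp
    have hB_le : B ≤ a := ENNReal.toReal_mono (measure_ne_top μ _) hν_le
    have hA_le : A ≤ p ^ 2 := by
      have := ENNReal.toReal_mono (by finiteness) hα_le
      rwa [ENNReal.toReal_mul, ← sq] at this
    have key : |A - B| ≤ a + p ^ 2 := by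
      rw [abs_le]
      constructor <;> nlinarith
    refine key.trans ?_
    nlinarith [sq_nonneg p]
  · -- exactly one coordinate equal to true
    push_neg at h2
    have hall : ∀ i, i ≠ j → x i = false := by
      intro i hi
      have := h2 i hi
      revert this; cases x i <;> simp
    -- value of the Bernoulli-product mass
    have hAval : A = p * (1 - p) ^ (N - 1) := by
      have hprod : (∏ k : Fin N, (if x k then μ H else 1 - μ H))
          = μ H * (1 - μ H) ^ (N - 1) := by
        rw [← Finset.mul_prod_erase Finset.univ _ (Finset.mem_univ j), hj, if_pos rfl]
        congr 1
        rw [Finset.prod_congr rfl (fun k hk => ?_), Finset.prod_const,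
          Finset.card_erase_of_mem (Finset.mem_univ j), Finset.card_univ, Fintype.card_fin]
        rw [hall k (Finset.mem_erase.1 hk).1, if_neg (by simp)]
      show ((Measure.pi fun _ : Fin N =>
        (μ H • Measure.dirac true + (1 - μ H) • Measure.dirac false : Measure Bool)) {x}).toReal = _
      rw [hαx, hprod, ENNReal.toReal_mul, ENNReal.toReal_pow,
        ENNReal.toReal_sub_of_le hq ENNReal.one_ne_top, ENNReal.toReal_one]
    have hSj : μ (T^[j.1] ⁻¹' H) = μ H :=
      (hT.iterate j.1).measure_preimage hH.nullMeasurableSet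
    have hν_le : (Measure.map (blockVec T H N 0) μ) {x} ≤ μ H := by
      rw [hνx, ← hSj]
      refine measure_mono ?_
      intro ω hω
      have h1 := mem_iInter.1 hω j
      rw [hj] at h1; simpa using h1
    have hB_le : B ≤ p := ENNReal.toReal_mono (measure_ne_top μ _) hν_le
    -- lower bound for ν {x}
    have hcover : T^[j.1] ⁻¹' H ⊆
        (⋂ k : Fin N, if x k then T^[k.1] ⁻¹' H else (T^[k.1] ⁻¹' H)ᶜ)
        ∪ ⋃ i ∈ Finset.univ.erase j, (T^[j.1] ⁻¹' H ∩ T^[i.1] ⁻¹' H) := by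
      intro ω hω
      by_cases hcase : ∃ i : Fin N, i ≠ j ∧ ω ∈ T^[i.1] ⁻¹' H
      · obtain ⟨i, hij, hi⟩ := hcase
        exact Or.inr (Set.mem_biUnion (Finset.mem_erase.2 ⟨hij, Finset.mem_univ i⟩) ⟨hω, hi⟩)
      · push_neg at hcase
        refine Or.inl (mem_iInter.2 fun k => ?_)
        by_cases hk : k = j
        · subst hk; rw [hj]; simpa using hω
        · rw [hall k hk]; simpa using hcase k hk
    have hν_ge : μ H ≤ (Measure.map (blockVec T H N 0) μ) {x}
        + (N - 1 : ℕ) * μ (H ∩ U) := by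
      rw [hνx, ← hSj]
      refine (measure_mono hcover).trans ?_
      refine (measure_union_le _ _).trans ?_
      refine add_le_add_right ?_ _
      refine (measure_biUnion_finset_le _ _).trans ?_
      have hcard : (Finset.univ.erase j).card = N - 1 := by
        rw [Finset.card_erase_of_mem (Finset.mem_univ j), Finset.card_univ, Fintype.card_fin]
      calc ∑ i ∈ Finset.univ.erase j, μ (T^[j.1] ⁻¹' H ∩ T^[i.1] ⁻¹' H)
          ≤ ∑ _i ∈ Finset.univ.erase j, μ (H ∩ U) := by
            refine Finset.sum_le_sum fun i hi => ?_
            exact pair_bound' hT hH (Ne.symm (Finset.mem_erase.1 hi).1)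
        _ = (N - 1 : ℕ) * μ (H ∩ U) := by
            rw [Finset.sum_const, hcard, nsmul_eq_mul]
    have hB_ge : p - ((N : ℝ) - 1) * a ≤ B := by
      have hfin : (Measure.map (blockVec T H N 0) μ) {x} + (N - 1 : ℕ) * μ (H ∩ U) ≠ ⊤ := by
        haveI : IsProbabilityMeasure (Measure.map (blockVec T H N 0) μ) :=
          Measure.isProbabilityMeasure_map (measurable_blockVec hT.measurable hH N 0).aemeasurable
        finiteness
      have := ENNReal.toReal_mono hfin hν_ge
      rw [ENNReal.toReal_add (measure_ne_top _ _) (by finiteness),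
        ENNReal.toReal_mul] at this
      have h1N : 1 ≤ N := by exact_mod_cast hN1
      have hNc : ((N - 1 : ℕ) : ℝ≥0∞).toReal = (N : ℝ) - 1 := by
        rw [ENNReal.toReal_natCast, Nat.cast_sub h1N]; ring
      rw [hNc] at this
      linarith
    -- bounds for A
    have hA_le : A ≤ p := by
      rw [hAval]
      exact mul_le_of_le_one_right hp0 (pow_le_one₀ (by linarith) (by linarith))
    have hA_ge : p - ((N : ℝ) - 1) * p ^ 2 ≤ A := by
      rw [hAval]
      have hpow : 1 + (N - 1 : ℕ) * (-p) ≤ (1 + (-p)) ^ (N - 1 : ℕ) :=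
        one_add_mul_le_pow (by linarith) _
      have hc : ((N - 1 : ℕ) : ℝ) = (N : ℝ) - 1 := by
        have : 1 ≤ N := by exact_mod_cast hN1
        push_cast [Nat.cast_sub this]; ring
      rw [hc] at hpow
      have h1 : 1 - ((N : ℝ) - 1) * p ≤ (1 - p) ^ (N - 1) := by
        have : 1 + (-p) = 1 - p := by ring
        rw [this] at hpow
        nlinarith
      nlinarith [pow_nonneg (by linarith : (0:ℝ) ≤ 1 - p) (N - 1)]
    have key : |A - B| ≤ ((N : ℝ) - 1) * (a + p ^ 2) := by
      rw [abs_le]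
      constructor <;> nlinarith
    refine key.trans ?_
    nlinarith [sq_nonneg p]

lemma D_bound {Ω : Type*} [MeasurableSpace Ω] (μ : Measure Ω) [IsProbabilityMeasure μ]
    {T : Ω → Ω} (hT : MeasurePreserving T μ μ) {H : Set Ω} (hH : MeasurableSet H)
    (N : ℕ) :
    ∑ x : Fin N → Bool,
      |((Measure.pi fun _ : Fin N =>
          (μ H • Measure.dirac true + (1 - μ H) • Measure.dirac false : Measure Bool)) {x}).toReal
        - ((Measure.map (blockVec T H N 0) μ) {x}).toReal|
      ≤ 2 * 2 ^ N * N * ((μ (H ∩ ⋃ j ∈ Icc 1 (N - 1), T^[j] ⁻¹' H)).toReal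
          + (μ H).toReal ^ 2) := by
  haveI := bern_prob (prob_le_one (μ := μ) (s := H))
  haveI : IsProbabilityMeasure (Measure.map (blockVec T H N 0) μ) :=
    Measure.isProbabilityMeasure_map (measurable_blockVec hT.measurable hH N 0).aemeasurable
  set α := (Measure.pi fun _ : Fin N =>
      (μ H • Measure.dirac true + (1 - μ H) • Measure.dirac false : Measure Bool)) with hαdef
  set ν := Measure.map (blockVec T H N 0) μ with hνdef
  set c : ℝ := (μ (H ∩ ⋃ j ∈ Icc 1 (N - 1), T^[j] ⁻¹' H)).toReal + (μ H).toReal ^ 2 with hc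
  have hc0 : 0 ≤ c := by positivity
  set f : (Fin N → Bool) → ℝ := fun x => (α {x}).toReal - (ν {x}).toReal with hf
  set z : Fin N → Bool := fun _ => false with hz
  have hperx : ∀ x : Fin N → Bool, x ≠ z → |f x| ≤ N * c :=
    fun x hx => perx μ hT hH N x hx
  have h0 : ∑ x : Fin N → Bool, f x = 0 := by
    rw [Finset.sum_sub_distrib, sum_toReal_singleton α, sum_toReal_singleton ν, sub_self]
  have hsplit : ∑ x : Fin N → Bool, f x
      = f z + ∑ x ∈ Finset.univ.erase z, f x := (Finset.add_sum_erase _ f (Finset.mem_univ z)).symm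
  have hzb : |f z| ≤ ∑ x ∈ Finset.univ.erase z, |f x| := by
    have : f z = -(∑ x ∈ Finset.univ.erase z, f x) := by
      rw [hsplit] at h0; linarith
    rw [this, abs_neg]
    exact Finset.abs_sum_le_sum_abs _ _
  have hNc0 : 0 ≤ (N : ℝ) * c := by positivity
  calc ∑ x : Fin N → Bool, |f x|
      = |f z| + ∑ x ∈ Finset.univ.erase z, |f x| :=
        (Finset.add_sum_erase _ (fun x => |f x|) (Finset.mem_univ z)).symm
    _ ≤ 2 * ∑ x ∈ Finset.univ.erase z, |f x| := by linarith
    _ ≤ 2 * ∑ _x ∈ Finset.univ.erase z, (N : ℝ) * c := by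
        refine mul_le_mul_of_nonneg_left (Finset.sum_le_sum fun x hx => ?_) (by norm_num)
        exact hperx x (Finset.mem_erase.1 hx).1
    _ ≤ 2 * ((2 ^ N : ℝ) * ((N : ℝ) * c)) := by
        rw [Finset.sum_const, nsmul_eq_mul]
        refine mul_le_mul_of_nonneg_left (mul_le_mul_of_nonneg_right ?_ hNc0) (by norm_num)
        calc ((Finset.univ.erase z).card : ℝ) ≤ (Fintype.card (Fin N → Bool) : ℝ) := by
              exact_mod_cast Finset.card_le_univ _
          _ = (2 : ℝ) ^ N := by
              rw [Fintype.card_fun, Fintype.card_bool, Fintype.card_fin]; push_cast; ring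
    _ = 2 * 2 ^ N * N * c := by ring

/-- There is a constant `C` depending only on `N` such that, with `ρ`
the Bernoulli measure on `{0,1}` with `ρ({1}) = μ(H)` and `ρ_N := ρ^{⊗N}`, for every
`n ≥ 1` and every `[0,1]`-valued `h`,
`|∫ h dρ_N^{⊗(n+1)} − ∫ h dν^{⊗(n+1)}|
  ≤ C [ n·μ(H ∩ ⋃_{1≤j≤N−1} T⁻ʲH) + n·μ(H)² ]`,
where `ν` is the law of the block vector `𝐗_0`. -/
theorem stmt6 (N : ℕ) (hN : 1 ≤ N) :
    ∃ C : ℝ, 0 < C ∧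
    ∀ (Ω : Type*) [MeasurableSpace Ω] (μ : Measure Ω) [IsProbabilityMeasure μ]
      (T : Ω → Ω), MeasurePreserving T μ μ →
    ∀ (H : Set Ω), MeasurableSet H → 0 < μ H →
    ∀ n : ℕ, 1 ≤ n →
    ∀ h : (Fin (n + 1) → (Fin N → Bool)) → ℝ, (∀ v, h v ∈ Icc (0 : ℝ) 1) →
    |(∫ v, h v ∂(Measure.pi fun _ : Fin (n + 1) =>
        Measure.pi fun _ : Fin N =>
          (μ H • Measure.dirac true + (1 - μ H) • Measure.dirac false : Measure Bool)))
      - ∫ v, h v ∂(Measure.pi fun _ : Fin (n + 1) => Measure.map (blockVec T H N 0) μ)|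
    ≤ C * ((n : ℝ) * (μ (H ∩ ⋃ j ∈ Icc 1 (N - 1), T^[j] ⁻¹' H)).toReal
        + (n : ℝ) * (μ H).toReal ^ 2) := by
  have hN0 : (0 : ℝ) < N := by exact_mod_cast hN
  refine ⟨4 * N * 2 ^ N, by positivity, ?_⟩
  intro Ω _ μ _ T hT H hH hHpos n hn h hh
  haveI := bern_prob (prob_le_one (μ := μ) (s := H))
  haveI : IsProbabilityMeasure (Measure.map (blockVec T H N 0) μ) :=
    Measure.isProbabilityMeasure_map (measurable_blockVec hT.measurable hH N 0).aemeasurable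
  have main := integral_pi_diff
    (Measure.pi fun _ : Fin N =>
      (μ H • Measure.dirac true + (1 - μ H) • Measure.dirac false : Measure Bool))
    (Measure.map (blockVec T H N 0) μ) (n + 1) h hh
  refine main.trans ?_
  have hD := D_bound μ hT hH N
  set a : ℝ := (μ (H ∩ ⋃ j ∈ Icc 1 (N - 1), T^[j] ⁻¹' H)).toReal with hadef
  set p : ℝ := (μ H).toReal with hpdef
  have ha0 : 0 ≤ a := ENNReal.toReal_nonneg
  have hp0 : 0 ≤ p := ENNReal.toReal_nonneg
  have hn1 : (1 : ℝ) ≤ n := by exact_mod_cast hn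
  have h2N : (0 : ℝ) < 2 ^ N := by positivity
  have step : ((n + 1 : ℕ) : ℝ) * ∑ x : Fin N → Bool,
      |((Measure.pi fun _ : Fin N =>
          (μ H • Measure.dirac true + (1 - μ H) • Measure.dirac false : Measure Bool)) {x}).toReal
        - ((Measure.map (blockVec T H N 0) μ) {x}).toReal|
      ≤ ((n + 1 : ℕ) : ℝ) * (2 * 2 ^ N * N * (a + p ^ 2)) := by
    refine mul_le_mul_of_nonneg_left hD (by positivity)
  refine step.trans ?_
  push_cast
  nlinarith [sq_nonneg p, mul_nonneg ha0 (le_of_lt h2N), mul_nonneg (sq_nonneg p) (le_of_lt h2N),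
    mul_nonneg (mul_nonneg ha0 (le_of_lt h2N)) (le_of_lt hN0),
    mul_nonneg (mul_nonneg (sq_nonneg p) (le_of_lt h2N)) (le_of_lt hN0)]
end

section
/- (Decorrelation transfer with boundary sets) Let (Ω', μ') be a probability space and U : Ω' → Ω' a measurable measure-preserving map. Let N ≥ 1 and let B_j ⊆ B̄_j and ∂B_j (0 ≤ j ≤ N−1) be measurable subsets of Ω' with B̄_j ∖ B_j ⊆ ∂B_j for each j. Put A := ⋃_j B_j, Ā := ⋃_j B̄_j, ∂A := ⋃_j ∂B_j, and 𝐁 := (1_{B_0}, …, 1_{B_{N−1}}) : Ω' → {0,1}^N. Assume there are constants C > 0, β ∈ (0,1) and integers k ≥ 1 and p > 2k such that for every bounded measurable h : Ω' → ℝ and every integer n' ≥ p, |∫ 1_{Ā} · (h ∘ U^{n'}) dμ' − μ'(Ā) ∫ h dμ'| ≤ C β^{n'−2k} μ'(Ā) ‖h‖_∞. Then there is a constant C' depending only on C such that for all integers n ≥ p and 0 ≤ l ≤ n−p, sup over all functions h : ({0,1}^N)^{n−l−p+1} → [0,1] of |∫ 1_A h(𝐁∘U^p, …, 𝐁∘U^{n−l})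 dμ' − μ'(A) ∫ h(𝐁∘U^p, …, 𝐁∘U^{n−l}) dμ'| is at most C' ( [1 + n μ'(Ā)] · μ'(∂A) + β^{p−2k} μ'(Ā) ). -/
open MeasureTheory Filter Set Topology
open scoped ENNReal NNReal

/-- The indicator block vector `𝐁 = (1_{B 0}, …, 1_{B (N-1)})`, with values in
`{0,1}^N` encoded as `Fin N → Bool`. -/
noncomputable def indVec {Ω' : Type*} {N : ℕ} (B : Fin N → Set Ω') (x : Ω') :
    Fin N → Bool :=
  fun j => @decide (x ∈ B j) (Classical.propDecidable _)

/-- **Decorrelation transfer with boundary sets.** Suppose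
`B j ⊆ B̄ j`, `B̄ j \ B j ⊆ ∂B j`, `A = ⋃ B j`, `Ā = ⋃ B̄ j`, `∂A = ⋃ ∂B j`, and
`|∫ 1_Ā (h∘U^{n'}) dμ' − μ'(Ā)∫h dμ'| ≤ C β^{n'−2k} μ'(Ā) ‖h‖_∞` for every bounded
measurable `h` and every `n' ≥ p > 2k`. Then there is `C'` depending only on `C` such
that for all `n ≥ p`, `0 ≤ l ≤ n−p` and every `[0,1]`-valued `h`,
`|∫ 1_A h(𝐁∘U^p,…,𝐁∘U^{n−l}) dμ' − μ'(A) ∫ h(𝐁∘U^p,…,𝐁∘U^{n−l}) dμ'|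
  ≤ C' ([1 + n μ'(Ā)] μ'(∂A) + β^{p−2k} μ'(Ā))`. -/
theorem stmt10 (C : ℝ) (hC : 0 < C) :
    ∃ C' : ℝ, 0 < C' ∧
    ∀ (Ω' : Type*) [MeasurableSpace Ω'] (μ' : Measure Ω') [IsProbabilityMeasure μ']
      (U : Ω' → Ω'), MeasurePreserving U μ' μ' →
    ∀ (N : ℕ), 1 ≤ N →
    ∀ (B Bbar dB : Fin N → Set Ω'),
      (∀ j, MeasurableSet (B j)) → (∀ j, MeasurableSet (Bbar j)) →
      (∀ j, MeasurableSet (dB j)) →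
      (∀ j, B j ⊆ Bbar j) → (∀ j, Bbar j \ B j ⊆ dB j) →
    ∀ (β : ℝ), 0 < β → β < 1 →
    ∀ (k p : ℕ), 1 ≤ k → 2 * k < p →
      (∀ (h : Ω' → ℝ), Measurable h → ∀ K : ℝ, (∀ x, |h x| ≤ K) →
        ∀ n' : ℕ, p ≤ n' →
        |(∫ x in ⋃ j, Bbar j, h (U^[n'] x) ∂μ')
            - (μ' (⋃ j, Bbar j)).toReal * ∫ x, h x ∂μ'|
          ≤ C * β ^ (n' - 2 * k) * (μ' (⋃ j, Bbar j)).toReal * K) →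
    ∀ (n l : ℕ), p ≤ n → l ≤ n - p →
    ∀ (h : (Fin (n - l - p + 1) → (Fin N → Bool)) → ℝ), (∀ v, h v ∈ Icc (0 : ℝ) 1) →
    |(∫ x in ⋃ j, B j, h (fun t => indVec B (U^[p + t.1] x)) ∂μ')
        - (μ' (⋃ j, B j)).toReal * ∫ x, h (fun t => indVec B (U^[p + t.1] x)) ∂μ'|
      ≤ C' * ((1 + (n : ℝ) * (μ' (⋃ j, Bbar j)).toReal) * (μ' (⋃ j, dB j)).toReal
          + β ^ (p - 2 * k) * (μ' (⋃ j, Bbar j)).toReal) := by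
  refine ⟨C + 2, by linarith, ?_⟩
  intro Ω' _ μ' _ U hU N hN B Bbar dB hBm hBbarm hdBm hsub hdiff β hβ0 hβ1 k p hk hkp
    hdec n l hpn hl h hh
  set A : Set Ω' := ⋃ j, B j with hA
  set Abar : Set Ω' := ⋃ j, Bbar j with hAbar
  set dA : Set Ω' := ⋃ j, dB j with hdA
  have hAm : MeasurableSet A := MeasurableSet.iUnion hBm
  have hAbarm : MeasurableSet Abar := MeasurableSet.iUnion hBbarm
  have hdAm : MeasurableSet dA := MeasurableSet.iUnion hdBm
  have hAAbar : A ⊆ Abar := Set.iUnion_mono hsub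
  have hdiffA : Abar \ A ⊆ dA := by
    rintro x ⟨hx, hxA⟩
    obtain ⟨s, ⟨j, rfl⟩, hxs⟩ := hx
    exact Set.mem_iUnion.2 ⟨j, hdiff j ⟨hxs, fun hxB => hxA (Set.mem_iUnion.2 ⟨j, hxB⟩)⟩⟩
  set g : Ω' → ℝ := fun y => h (fun t => indVec B (U^[t.1] y)) with hg
  have hgm : Measurable g := by
    apply Measurable.comp (measurable_of_finite h)
    apply measurable_pi_lambda
    intro t
    apply measurable_pi_lambda
    intro j
    apply measurable_to_countable'
    intro b
    cases b
    · convert ((hBm j).compl).preimage (hU.measurable.iterate t.1) using 1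
      ext y; simp [indVec]
    · convert (hBm j).preimage (hU.measurable.iterate t.1) using 1
      ext y; simp [indVec]
  have hgb : ∀ y, |g y| ≤ 1 := by
    intro y
    have := hh (fun t => indVec B (U^[t.1] y))
    rw [Set.mem_Icc] at this
    exact abs_le.2 ⟨by linarith [this.1], this.2⟩
  have hFG : ∀ x : Ω', h (fun t => indVec B (U^[p + t.1] x)) = g (U^[p] x) := by
    intro x
    exact congrArg h (funext fun t => by rw [add_comm, Function.iterate_add_apply])
  simp only [hFG]
  -- integrability of g ∘ U^[p]
  have hgUm : Measurable fun x => g (U^[p] x) := hgm.comp (hU.measurable.iterate p)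
  have hgUint : Integrable (fun x => g (U^[p] x)) μ' :=
    (integrable_const (1 : ℝ)).mono' hgUm.aestronglyMeasurable
      (Filter.Eventually.of_forall fun x => by simpa using hgb (U^[p] x))
  -- ∫ g ∘ U^p = ∫ g
  have hmp : MeasurePreserving (U^[p]) μ' μ' := hU.iterate p
  have hint_eq : ∫ x, g (U^[p] x) ∂μ' = ∫ x, g x ∂μ' := by
    rw [← MeasureTheory.integral_map hmp.measurable.aemeasurable
      (hmp.map_eq ▸ hgm.aestronglyMeasurable), hmp.map_eq]
  rw [hint_eq]
  set D : ℝ := (μ' dA).toReal with hD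
  set M : ℝ := (μ' Abar).toReal with hM
  set I : ℝ := ∫ x, g x ∂μ' with hI
  have hD0 : 0 ≤ D := ENNReal.toReal_nonneg
  have hM0 : 0 ≤ M := ENNReal.toReal_nonneg
  -- first term
  have e1 : |(∫ x in A, g (U^[p] x) ∂μ') - ∫ x in Abar, g (U^[p] x) ∂μ'| ≤ D := by
    have hdiffint : ∫ x in Abar \ A, g (U^[p] x) ∂μ'
        = (∫ x in Abar, g (U^[p] x) ∂μ') - ∫ x in A, g (U^[p] x) ∂μ' :=
      integral_diff hAm hgUint.integrableOn hAAbar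
    rw [abs_sub_comm, ← hdiffint]
    calc |∫ x in Abar \ A, g (U^[p] x) ∂μ'| ≤ 1 * (μ' (Abar \ A)).toReal := by
          have := norm_setIntegral_le_of_norm_le_const (μ := μ') (s := Abar \ A)
            (f := fun x => g (U^[p] x)) (C := 1) (measure_lt_top μ' _)
            (fun x _ => by simpa [Real.norm_eq_abs] using hgb (U^[p] x))
          rw [← Real.norm_eq_abs]; exact this
      _ ≤ D := by
          rw [one_mul]
          exact ENNReal.toReal_mono (measure_ne_top μ' _) (measure_mono hdiffA)
  -- second term
  have e2 : |(∫ x in Abar, g (U^[p] x) ∂μ') - M * I| ≤ C * β ^ (p - 2 * k) * M := by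
    have := hdec g hgm 1 hgb p le_rfl
    simpa using this
  -- third term
  have hI1 : |I| ≤ 1 := by
    have hgint : Integrable g μ' := (integrable_const (1 : ℝ)).mono' hgm.aestronglyMeasurable
      (Filter.Eventually.of_forall fun x => by simpa using hgb x)
    calc |I| ≤ ∫ x, |g x| ∂μ' := by
          rw [hI, ← Real.norm_eq_abs]
          exact (norm_integral_le_integral_norm g).trans (le_of_eq (by simp [Real.norm_eq_abs]))
      _ ≤ ∫ x, (1:ℝ) ∂μ' := by
          apply integral_mono hgint.abs (integrable_const 1)
          intro x; exact hgb x
      _ = 1 := by simp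
  have e3 : |M - (μ' A).toReal| ≤ D := by
    have h1 : (μ' A).toReal ≤ M :=
      ENNReal.toReal_mono (measure_ne_top μ' _) (measure_mono hAAbar)
    have h2 : M - (μ' A).toReal ≤ D := by
      have : μ' Abar ≤ μ' A + μ' dA := by
        calc μ' Abar ≤ μ' (A ∪ dA) := measure_mono (fun x hx => by
            by_cases hxA : x ∈ A
            · exact Or.inl hxA
            · exact Or.inr (hdiffA ⟨hx, hxA⟩))
          _ ≤ μ' A + μ' dA := measure_union_le _ _
      have := ENNReal.toReal_mono (by finiteness) this
      rw [ENNReal.toReal_add (measure_ne_top μ' _) (measure_ne_top μ' _)] at this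
      linarith
    rw [abs_of_nonneg (by linarith)]
    exact h2
  -- combine
  have key : |(∫ x in A, g (U^[p] x) ∂μ') - (μ' A).toReal * I|
      ≤ D + C * β ^ (p - 2 * k) * M + D := by
    have : (∫ x in A, g (U^[p] x) ∂μ') - (μ' A).toReal * I
        = ((∫ x in A, g (U^[p] x) ∂μ') - ∫ x in Abar, g (U^[p] x) ∂μ')
          + ((∫ x in Abar, g (U^[p] x) ∂μ') - M * I)
          + (M - (μ' A).toReal) * I := by ring
    rw [this]
    calc _ ≤ |((∫ x in A, g (U^[p] x) ∂μ') - ∫ x in Abar, g (U^[p] x) ∂μ')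
          + ((∫ x in Abar, g (U^[p] x) ∂μ') - M * I)| + |(M - (μ' A).toReal) * I| :=
            abs_add_le _ _
      _ ≤ |(∫ x in A, g (U^[p] x) ∂μ') - ∫ x in Abar, g (U^[p] x) ∂μ'|
          + |(∫ x in Abar, g (U^[p] x) ∂μ') - M * I| + |M - (μ' A).toReal| * |I| := by
            rw [abs_mul]; linarith [abs_add_le ((∫ x in A, g (U^[p] x) ∂μ')
              - ∫ x in Abar, g (U^[p] x) ∂μ') ((∫ x in Abar, g (U^[p] x) ∂μ') - M * I)]
      _ ≤ D + C * β ^ (p - 2 * k) * M + D := by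
            have := mul_le_mul e3 hI1 (abs_nonneg _) hD0
            nlinarith [abs_nonneg I]
  refine key.trans ?_
  have hβp : 0 ≤ β ^ (p - 2 * k) := le_of_lt (pow_pos hβ0 _)
  have hn0 : (0:ℝ) ≤ (n:ℝ) := Nat.cast_nonneg n
  nlinarith [mul_nonneg hn0 hM0, mul_nonneg (mul_nonneg hn0 hM0) hD0,
    mul_nonneg hβp hM0, mul_nonneg hC.le (mul_nonneg hβp hM0)]
end

section
/- (Measure of sections and their truncations) For every measurable section A ⊆ Δ such that π_X(A) and π_X(π_{Δ_m}A) are measurable: (i) μ_Δ(A) = (∫ R dμ_X)^{-1} · μ_X(π_X(A)); (ii) μ_{Δ_m}(π_{Δ_m}A) = (∫ min(R, m+1) dμ_X)^{-1} · μ_X(π_X(A)); consequently (iii) μ_{Δ_m}(π_{Δ_m}A) = (∫ R dμ_X / ∫ min(R, m+1) dμ_X) · μ_Δ(A). -/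
open MeasureTheory Filter Set Topology
open scoped ENNReal NNReal

variable {X : Type*} [MeasurableSpace X]

/-- The Young tower `Δ := {(x,n) : n < R x}`, viewed as a subset of `X × ℕ`. -/
def towerSet (R : X → ℕ) : Set (X × ℕ) := {p | p.2 < R p.1}

/-- The tower map `F(x,n) = (x, n+1)` if `n+1 < R x`, and `F(x,n) = (g x, 0)`
otherwise. -/
def towerMap (R : X → ℕ) (g : X → X) : X × ℕ → X × ℕ :=
  fun p => if p.2 + 1 < R p.1 then (p.1, p.2 + 1) else (g p.1, 0)

/-- The tower measure `μ_Δ(E) = (∫ R dμ_X)⁻¹ Σ_{n≥0} μ_X {x : n < R x ∧ (x,n) ∈ E}`. -/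
noncomputable def towerMeasure (μX : Measure X) (R : X → ℕ) : Measure (X × ℕ) :=
  (∫⁻ x, (R x : ℝ≥0∞) ∂μX)⁻¹ •
    Measure.sum (fun n : ℕ => Measure.map (fun x => (x, n)) (μX.restrict {x | n < R x}))

/-- The truncated tower `Δ_m := {(x,n) ∈ Δ : n ≤ m}`. -/
def truncSet (R : X → ℕ) (m : ℕ) : Set (X × ℕ) := {p | p.2 < R p.1 ∧ p.2 ≤ m}

/-- The normalized measure `μ_{Δ_m} := μ_Δ(· ∩ Δ_m)/μ_Δ(Δ_m)`. -/
noncomputable def truncMeasure (μX : Measure X) (R : X → ℕ) (m : ℕ) : Measure (X × ℕ) :=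
  (towerMeasure μX R (truncSet R m))⁻¹ • (towerMeasure μX R).restrict (truncSet R m)

/-- The truncation map `π_{Δ_m}(x,n) := (x, min n m)`. -/
def truncProj (m : ℕ) : X × ℕ → X × ℕ := fun p => (p.1, min p.2 m)

/-- The first return time `R_m(z) := inf {n ≥ 1 : F^n z ∈ Δ_m}` to the truncated
tower. -/
noncomputable def returnTime (R : X → ℕ) (g : X → X) (m : ℕ) (z : X × ℕ) : ℕ :=
  sInf {n | 1 ≤ n ∧ (towerMap R g)^[n] z ∈ truncSet R m}

/-- The induced map `T_m := F^{R_m}` on the truncated tower. -/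
noncomputable def inducedMap (R : X → ℕ) (g : X → X) (m : ℕ) : X × ℕ → X × ℕ :=
  fun z => (towerMap R g)^[returnTime R g m z] z

lemma tsum_ite_lt' (k : ℕ) : (∑' n : ℕ, (if n < k then (1:ℝ≥0∞) else 0)) = k := by
  rw [tsum_eq_sum (s := Finset.range k) (by intro n hn; simp [Finset.mem_range] at hn; simp [hn])]
  simp [Finset.filter_true_of_mem (fun n hn => Finset.mem_range.1 hn)]

lemma lintegral_nat_eq_tsum' (μ : Measure X) (f : X → ℕ) (hf : Measurable f) :
    (∫⁻ x, (f x : ℝ≥0∞) ∂μ) = ∑' n : ℕ, μ {x | n < f x} := by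
  have : ∀ x, (f x : ℝ≥0∞) = ∑' n : ℕ, (if n < f x then (1:ℝ≥0∞) else 0) :=
    fun x => (tsum_ite_lt' (f x)).symm
  simp_rw [this]
  rw [lintegral_tsum (fun n => (Measurable.ite (measurableSet_lt measurable_const hf)
    measurable_const measurable_const).aemeasurable)]
  congr 1; ext n
  rw [← lintegral_indicator_one (measurableSet_lt measurable_const hf)]
  congr 1; ext x; simp [Set.indicator_apply]

lemma section_measure' (μX : Measure X) (R : X → ℕ)
    (B : Set (X × ℕ)) (hBsub : B ⊆ towerSet R) (hBmeas : MeasurableSet B)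
    (hBsec : Set.InjOn Prod.fst B) :
    towerMeasure μX R B = (∫⁻ x, (R x : ℝ≥0∞) ∂μX)⁻¹ * μX (Prod.fst '' B) := by
  set S : ℕ → Set X := fun n => (fun x => (x, n)) ⁻¹' B with hS
  have hSmeas : ∀ n, MeasurableSet (S n) :=
    fun n => (measurable_id.prodMk measurable_const) hBmeas
  have hSsub : ∀ n, S n ⊆ {x | n < R x} := fun n x hx => hBsub hx
  have hdisj : Pairwise (Function.onFun Disjoint S) := by
    intro i j hij
    refine Set.disjoint_left.2 fun x hxi hxj => hij ?_
    exact congrArg Prod.snd (hBsec hxi hxj rfl)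
  have hunion : (⋃ n, S n) = Prod.fst '' B := by
    ext x
    simp only [Set.mem_iUnion, Set.mem_image, hS, Set.mem_preimage]
    constructor
    · rintro ⟨n, hn⟩; exact ⟨(x, n), hn, rfl⟩
    · rintro ⟨⟨y, n⟩, hp, rfl⟩; exact ⟨n, hp⟩
  rw [towerMeasure, Measure.smul_apply, smul_eq_mul, Measure.sum_apply _ hBmeas]
  congr 1
  calc (∑' n, (Measure.map (fun x => (x, n)) (μX.restrict {x | n < R x})) B)
      = ∑' n, μX (S n) := by
        refine tsum_congr fun n => ?_
        have hmn : Measurable fun x : X => (x, n) := measurable_id.prodMk measurable_const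
        rw [Measure.map_apply hmn hBmeas,
          Measure.restrict_apply (hSmeas n), Set.inter_eq_left.2 (hSsub n)]
    _ = μX (⋃ n, S n) := (measure_iUnion hdisj hSmeas).symm
    _ = μX (Prod.fst '' B) := by rw [hunion]

/-- **Measure of sections and their truncations.** For every measurable
section `A ⊆ Δ` (with `π_X(A)` and `π_{Δ_m}(A)` measurable):
(i) `μ_Δ(A) = (∫ R dμ_X)⁻¹ · μ_X(π_X(A))`;
(ii) `μ_{Δ_m}(π_{Δ_m}A) = (∫ min(R, m+1) dμ_X)⁻¹ · μ_X(π_X(A))`;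
(iii) `μ_{Δ_m}(π_{Δ_m}A) = (∫ R dμ_X / ∫ min(R, m+1) dμ_X) · μ_Δ(A)`. -/
theorem stmt12 (μX : Measure X) [IsProbabilityMeasure μX]
    (R : X → ℕ) (hRmeas : Measurable R) (hR1 : ∀ x, 1 ≤ R x)
    (hRint : (∫⁻ x, (R x : ℝ≥0∞) ∂μX) < ⊤)
    (g : X → X) (hg : MeasurePreserving g μX μX)
    (m : ℕ)
    (A : Set (X × ℕ)) (hAsub : A ⊆ towerSet R) (hAmeas : MeasurableSet A)
    (hAsec : Set.InjOn Prod.fst A)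
    (hfst : MeasurableSet (Prod.fst '' A))
    (hproj : MeasurableSet (truncProj m '' A)) :
    towerMeasure μX R A = (∫⁻ x, (R x : ℝ≥0∞) ∂μX)⁻¹ * μX (Prod.fst '' A)
    ∧ truncMeasure μX R m (truncProj m '' A)
        = (∫⁻ x, ((min (R x) (m + 1) : ℕ) : ℝ≥0∞) ∂μX)⁻¹ * μX (Prod.fst '' A)
    ∧ truncMeasure μX R m (truncProj m '' A)
        = ((∫⁻ x, (R x : ℝ≥0∞) ∂μX) / (∫⁻ x, ((min (R x) (m + 1) : ℕ) : ℝ≥0∞) ∂μX))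
          * towerMeasure μX R A := by
  classical
  set I := ∫⁻ x, (R x : ℝ≥0∞) ∂μX with hIdef
  set J := ∫⁻ x, ((min (R x) (m + 1) : ℕ) : ℝ≥0∞) ∂μX with hJdef
  have hItop : I ≠ ⊤ := hRint.ne
  have hI1 : (1 : ℝ≥0∞) ≤ I := by
    calc (1 : ℝ≥0∞) = ∫⁻ _, 1 ∂μX := by simp
      _ ≤ I := lintegral_mono fun x => by exact Nat.one_le_cast.2 (hR1 x)
  have hI0 : I ≠ 0 := by intro h; rw [h] at hI1; simp at hI1
  have hJI : J ≤ I := lintegral_mono fun x => by exact Nat.cast_le.2 (min_le_left (R x) (m + 1))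
  have hJtop : J ≠ ⊤ := (lt_of_le_of_lt hJI hRint).ne
  have hJ1 : (1 : ℝ≥0∞) ≤ J := by
    calc (1 : ℝ≥0∞) = ∫⁻ _, 1 ∂μX := by simp
      _ ≤ J := lintegral_mono fun x => by
          exact Nat.one_le_cast.2 (le_min (hR1 x) (Nat.succ_le_succ (Nat.zero_le m)))
  have hJ0 : J ≠ 0 := by intro h; rw [h] at hJ1; simp at hJ1
  -- the truncated image A' := truncProj m '' A
  set A' := truncProj m '' A with hA'def
  have hA'sub : A' ⊆ truncSet R m := by
    rintro p ⟨⟨x, n⟩, hq, rfl⟩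
    exact ⟨lt_of_le_of_lt (min_le_left n m) (hAsub hq), min_le_right n m⟩
  have hA'tower : A' ⊆ towerSet R := fun p hp => (hA'sub hp).1
  have hA'sec : Set.InjOn Prod.fst A' := by
    rintro ⟨x, k⟩ ⟨⟨y, n⟩, hy, hyk⟩ ⟨x', k'⟩ ⟨⟨y', n'⟩, hy', hyk'⟩ hfsteq
    simp only [truncProj, Prod.mk.injEq] at hyk hyk' hfsteq
    obtain ⟨rfl, rfl⟩ := hyk; obtain ⟨rfl, rfl⟩ := hyk'
    have := hAsec hy hy' hfsteq
    injection this with h1 h2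
    rw [h1, h2]
  have hfstA' : Prod.fst '' A' = Prod.fst '' A := by
    rw [hA'def, Set.image_image]; rfl
  -- measurability of the truncated tower
  have hTm : MeasurableSet (truncSet R m) := by
    have : truncSet R m = {p : X × ℕ | p.2 < R p.1} ∩ {p : X × ℕ | p.2 ≤ m} := rfl
    rw [this]
    exact (measurableSet_lt measurable_snd (hRmeas.comp measurable_fst)).inter
      (measurable_snd measurableSet_Iic)
  -- measure of the truncated tower
  have hTmVal : towerMeasure μX R (truncSet R m) = I⁻¹ * J := by
    rw [towerMeasure, Measure.smul_apply, smul_eq_mul, Measure.sum_apply _ hTm, ← hIdef]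
    congr 1
    rw [hJdef, lintegral_nat_eq_tsum' μX (fun x => min (R x) (m + 1))
      (hRmeas.min measurable_const)]
    refine tsum_congr fun n => ?_
    have hmn : Measurable fun x : X => (x, n) := measurable_id.prodMk measurable_const
    rw [Measure.map_apply hmn hTm, Measure.restrict_apply (hmn hTm)]
    congr 1
    ext x
    simp only [Set.mem_inter_iff, Set.mem_preimage, Set.mem_setOf_eq, truncSet, lt_min_iff,
      Nat.lt_succ_iff]
    tauto
  -- part (i)
  have part1 : towerMeasure μX R A = I⁻¹ * μX (Prod.fst '' A) :=
    section_measure' μX R A hAsub hAmeas hAsec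
  have hA'val : towerMeasure μX R A' = I⁻¹ * μX (Prod.fst '' A) := by
    rw [section_measure' μX R A' hA'tower hproj hA'sec, hfstA']
  -- truncMeasure of A'
  have htrunc : truncMeasure μX R m A' = (I⁻¹ * J)⁻¹ * (I⁻¹ * μX (Prod.fst '' A)) := by
    rw [truncMeasure, Measure.smul_apply, smul_eq_mul, Measure.restrict_apply hproj,
      Set.inter_eq_left.2 hA'sub, hTmVal, hA'val]
  have hkey : (I⁻¹ * J)⁻¹ * I⁻¹ = J⁻¹ := by
    rw [ENNReal.mul_inv (Or.inl (ENNReal.inv_ne_zero.2 hItop))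
      (Or.inl (ENNReal.inv_ne_top.2 hI0)), inv_inv, mul_comm I J⁻¹, mul_assoc,
      ENNReal.mul_inv_cancel hI0 hItop, mul_one]
  have part2 : truncMeasure μX R m A' = J⁻¹ * μX (Prod.fst '' A) := by
    rw [htrunc, ← mul_assoc, hkey]
  have hkey2 : I / J * I⁻¹ = J⁻¹ := by
    rw [ENNReal.div_eq_inv_mul, mul_assoc, ENNReal.mul_inv_cancel hI0 hItop, mul_one]
  refine ⟨part1, part2, ?_⟩
  rw [part2, part1, ← mul_assoc]
  congr 1
  exact hkey2.symm
end

section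
/- (Reduction of short returns from the truncated tower to the base) For every measurable section A ⊆ Δ (with π_X(A) and π_{Δ_m}A measurable) and every integer K ≥ 2, ∫_{Δ_m} 1_{π_{Δ_m}A} · 1_{⋃_{j=1}^{K−1} T_m^{-j}(π_{Δ_m}A)} dμ_{Δ_m} ≤ (∫ min(R, m+1) dμ_X)^{-1} · ∫_X 1_{π_X(A)} · 1_{⋃_{j=1}^{K} g^{-j}(π_X(A))} dμ_X. -/
open MeasureTheory Filter Set Topology
open scoped ENNReal NNReal

variable {X : Type*} [MeasurableSpace X]

set_option linter.unusedSectionVars false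

/- ## Auxiliary lemmas -/

lemma measurableSet_secLike {s : ℕ → Set X} (hs : ∀ n, MeasurableSet (s n)) :
    MeasurableSet {p : X × ℕ | p.1 ∈ s p.2} := by
  have h : {p : X × ℕ | p.1 ∈ s p.2} = ⋃ n, s n ×ˢ ({n} : Set ℕ) := by
    ext ⟨x, k⟩
    simp only [mem_setOf_eq, mem_iUnion, Set.mem_prod, Set.mem_singleton_iff]
    constructor
    · intro h; exact ⟨k, h, rfl⟩
    · rintro ⟨n, h, rfl⟩; exact h
  rw [h]
  exact MeasurableSet.iUnion fun n => (hs n).prod (measurableSet_singleton n)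

lemma measurableSet_natLt (hR : Measurable R) (n : ℕ) : MeasurableSet {x : X | n < R x} :=
  hR ((Set.to_countable {k : ℕ | n < k}).measurableSet)

lemma measurableSet_truncSet {R : X → ℕ} (hR : Measurable R) (m : ℕ) :
    MeasurableSet (truncSet R m) := by
  have : truncSet R m = {p : X × ℕ | p.1 ∈ {x | p.2 < R x ∧ p.2 ≤ m}} := rfl
  rw [this]
  refine measurableSet_secLike (s := fun n => {x | n < R x ∧ n ≤ m}) fun n => ?_
  show MeasurableSet {x : X | n < R x ∧ n ≤ m}
  exact (measurableSet_natLt hR n).inter (MeasurableSet.const _)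

lemma measurable_towerMap {R : X → ℕ} {g : X → X} (hR : Measurable R) (hg : Measurable g) :
    Measurable (towerMap R g) := by
  apply measurable_from_prod_countable_left
  intro n
  have : (fun x => towerMap R g (x, n)) =
      fun x => if n + 1 < R x then (x, n + 1) else (g x, 0) := rfl
  rw [this]
  exact Measurable.ite (measurableSet_natLt hR (n := n + 1) (R := R))
    (measurable_id.prodMk measurable_const) (hg.prodMk measurable_const)

lemma measurable_natSInf {α} [MeasurableSpace α] {D : ℕ → Set α} (hD : ∀ n, MeasurableSet (D n)) :
    Measurable fun z => sInf {n | z ∈ D n} := by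
  apply measurable_to_countable'
  intro k
  match k with
  | 0 =>
    have h : (fun z => sInf {n | z ∈ D n}) ⁻¹' {0} = D 0 ∪ ⋂ n, (D n)ᶜ := by
      ext z
      simp [Nat.sInf_eq_zero, Set.eq_empty_iff_forall_notMem]
    rw [h]
    exact (hD 0).union (MeasurableSet.iInter fun n => (hD n).compl)
  | (k+1) =>
    have h : (fun z => sInf {n | z ∈ D n}) ⁻¹' {k+1} = D (k+1) ∩ ⋂ j ∈ Finset.range (k+1), (D j)ᶜ := by
      ext z
      simp only [mem_preimage, Set.mem_singleton_iff, Set.mem_inter_iff, mem_iInter,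
        Finset.mem_range, mem_compl_iff, mem_setOf_eq]
      constructor
      · intro h
        have hne : {n | z ∈ D n}.Nonempty := by
          by_contra hc
          rw [Set.not_nonempty_iff_eq_empty] at hc
          rw [Nat.sInf_eq_zero.mpr (Or.inr hc)] at h
          omega
        have hmem := Nat.sInf_mem hne
        rw [h] at hmem
        refine ⟨hmem, fun j hj => Nat.notMem_of_lt_sInf (s := {n | z ∈ D n}) ?_⟩
        omega
      · rintro ⟨h1, h2⟩
        have hle : sInf {n | z ∈ D n} ≤ k + 1 := Nat.sInf_le h1
        have hmem := Nat.sInf_mem (⟨k + 1, h1⟩ : {n | z ∈ D n}.Nonempty)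
        by_contra hne
        have hlt : sInf {n | z ∈ D n} < k + 1 := lt_of_le_of_ne hle hne
        exact h2 _ hlt hmem
    rw [h]
    exact (hD (k+1)).inter (MeasurableSet.biInter (Finset.range (k+1)).countable_toSet
      fun j _ => (hD j).compl)

lemma measurable_returnTime {R : X → ℕ} {g : X → X} (hR : Measurable R) (hg : Measurable g)
    (m : ℕ) : Measurable (returnTime R g m) := by
  have hD : ∀ n, MeasurableSet {z : X × ℕ | 1 ≤ n ∧ (towerMap R g)^[n] z ∈ truncSet R m} := by
    intro n
    rcases Nat.eq_zero_or_pos n with h | h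
    · subst h; simp
    · have : {z : X × ℕ | 1 ≤ n ∧ (towerMap R g)^[n] z ∈ truncSet R m}
          = (towerMap R g)^[n] ⁻¹' truncSet R m := by
        ext z; simp only [mem_setOf_eq, mem_preimage]
        exact and_iff_right h
      rw [this]
      exact ((measurable_towerMap hR hg).iterate n) (measurableSet_truncSet hR m)
  exact measurable_natSInf hD

lemma measurable_inducedMap {R : X → ℕ} {g : X → X} (hR : Measurable R) (hg : Measurable g)
    (m : ℕ) : Measurable (inducedMap R g m) := by
  have h1 : Measurable fun p : (X × ℕ) × ℕ => (towerMap R g)^[p.2] p.1 :=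
    measurable_from_prod_countable_left fun n => (measurable_towerMap hR hg).iterate n
  have : inducedMap R g m = fun z =>
      (fun p : (X × ℕ) × ℕ => (towerMap R g)^[p.2] p.1) (z, returnTime R g m z) := rfl
  rw [this]
  exact h1.comp (measurable_id.prodMk (measurable_returnTime hR hg m))

/- ## Dynamics -/

lemma towerMap_iterate_up (R : X → ℕ) (g : X → X) :
    ∀ (k : ℕ) (x : X) (n : ℕ), n + k < R x → (towerMap R g)^[k] (x, n) = (x, n + k) := by
  intro k
  induction k with
  | zero => intro x n _; simp
  | succ k ih =>
    intro x n h
    rw [Function.iterate_succ_apply]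
    have h1 : towerMap R g (x, n) = (x, n + 1) := by
      unfold towerMap
      simp only
      rw [if_pos (by omega : n + 1 < R x)]
    rw [h1, ih x (n + 1) (by omega)]
    congr 1
    omega

lemma towerMap_iterate_top (R : X → ℕ) (g : X → X) {x : X} {n : ℕ} (hx : n < R x) :
    (towerMap R g)^[R x - n] (x, n) = (g x, 0) := by
  have hk : R x - n = (R x - n - 1) + 1 := by omega
  rw [hk, Function.iterate_succ_apply',
    towerMap_iterate_up R g (R x - n - 1) x n (by omega)]
  unfold towerMap
  simp only
  rw [if_neg (by omega : ¬ n + (R x - n - 1) + 1 < R x)]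

lemma inducedMap_eq {R : X → ℕ} {g : X → X} {m : ℕ} (hR1 : ∀ x, 1 ≤ R x)
    {x : X} {n : ℕ} (hx : n < R x) (hm : n ≤ m) :
    (n + 1 < R x ∧ n + 1 ≤ m ∧ inducedMap R g m (x, n) = (x, n + 1)) ∨
    inducedMap R g m (x, n) = (g x, 0) := by
  unfold inducedMap returnTime
  by_cases h : n + 1 < R x ∧ n + 1 ≤ m
  · left
    have h1 : (towerMap R g)^[1] (x, n) = (x, n + 1) := by
      rw [Function.iterate_one]
      unfold towerMap
      simp only
      rw [if_pos h.1]
    have hmem : 1 ∈ {k | 1 ≤ k ∧ (towerMap R g)^[k] (x, n) ∈ truncSet R m} :=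
      ⟨le_refl 1, by rw [h1]; exact ⟨h.1, h.2⟩⟩
    have hs : sInf {k | 1 ≤ k ∧ (towerMap R g)^[k] (x, n) ∈ truncSet R m} = 1 :=
      le_antisymm (Nat.sInf_le hmem) (Nat.sInf_mem ⟨1, hmem⟩).1
    rw [hs]
    exact ⟨h.1, h.2, h1⟩
  · right
    by_cases htop : n + 1 < R x
    · -- then ¬ (n+1 ≤ m), so m = n
      have hnm : n = m := by omega
      have hF : (towerMap R g)^[R x - n] (x, n) = (g x, 0) := towerMap_iterate_top R g hx
      have hmem : R x - n ∈ {k | 1 ≤ k ∧ (towerMap R g)^[k] (x, n) ∈ truncSet R m} :=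
        ⟨by omega, by rw [hF]; exact ⟨hR1 (g x), Nat.zero_le m⟩⟩
      have hmin : ∀ k ∈ {k | 1 ≤ k ∧ (towerMap R g)^[k] (x, n) ∈ truncSet R m}, R x - n ≤ k := by
        rintro k ⟨hk1, hk2⟩
        by_contra hlt
        push_neg at hlt
        rw [towerMap_iterate_up R g k x n (by omega)] at hk2
        have : n + k ≤ m := hk2.2
        omega
      have hs : sInf {k | 1 ≤ k ∧ (towerMap R g)^[k] (x, n) ∈ truncSet R m} = R x - n :=
        le_antisymm (Nat.sInf_le hmem) (hmin _ (Nat.sInf_mem ⟨_, hmem⟩))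
      rw [hs, hF]
    · -- n + 1 = R x
      have h1 : (towerMap R g)^[1] (x, n) = (g x, 0) := by
        rw [Function.iterate_one]
        unfold towerMap
        simp only
        rw [if_neg htop]
      have hmem : 1 ∈ {k | 1 ≤ k ∧ (towerMap R g)^[k] (x, n) ∈ truncSet R m} :=
        ⟨le_refl 1, by rw [h1]; exact ⟨hR1 (g x), Nat.zero_le m⟩⟩
      have hs : sInf {k | 1 ≤ k ∧ (towerMap R g)^[k] (x, n) ∈ truncSet R m} = 1 :=
        le_antisymm (Nat.sInf_le hmem) (Nat.sInf_mem ⟨1, hmem⟩).1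
      rw [hs, h1]

lemma inducedMap_iterate {R : X → ℕ} {g : X → X} {m : ℕ} (hR1 : ∀ x, 1 ≤ R x) :
    ∀ (j : ℕ) (x : X) (n : ℕ), n < R x → n ≤ m →
    ∃ i n', i ≤ j ∧ (inducedMap R g m)^[j] (x, n) = (g^[i] x, n') ∧
      n' < R (g^[i] x) ∧ n' ≤ m ∧ (i = 0 → n' = n + j) := by
  intro j
  induction j with
  | zero =>
    intro x n h1 h2
    exact ⟨0, n, le_refl 0, by simp, by simpa using h1, h2, fun _ => by simp⟩
  | succ j ih =>
    intro x n h1 h2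
    obtain ⟨i, n', hij, hiter, hn'R, hn'm, hi0⟩ := ih x n h1 h2
    rw [Function.iterate_succ_apply', hiter]
    rcases inducedMap_eq hR1 hn'R hn'm with ⟨hu1, hu2, heq⟩ | heq
    · exact ⟨i, n' + 1, by omega, by rw [heq], hu1, hu2,
        fun h => by have := hi0 h; omega⟩
    · refine ⟨i + 1, 0, by omega, ?_, ?_, Nat.zero_le m, by omega⟩
      · rw [heq, Function.iterate_succ_apply']
      · exact hR1 _

/- ## Measure computations -/

lemma lintegral_natCast_eq_tsum (μ : Measure X) {f : X → ℕ} (hf : Measurable f) :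
    ∫⁻ x, (f x : ℝ≥0∞) ∂μ = ∑' n : ℕ, μ {x | n < f x} := by
  have hms : ∀ n : ℕ, MeasurableSet {x | n < f x} := fun n =>
    hf ((Set.to_countable {k : ℕ | n < k}).measurableSet)
  have key : ∀ x, (f x : ℝ≥0∞)
      = ∑' n : ℕ, Set.indicator {x | n < f x} (fun _ => (1 : ℝ≥0∞)) x := by
    intro x
    rw [tsum_eq_sum (s := Finset.range (f x)) (by
      intro n hn
      rw [Finset.mem_range, not_lt] at hn
      simp [Set.indicator, not_lt.mpr hn])]
    have : ∀ n ∈ Finset.range (f x),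
        Set.indicator {x | n < f x} (fun _ => (1 : ℝ≥0∞)) x = 1 := by
      intro n hn
      rw [Finset.mem_range] at hn
      simp [Set.indicator, hn]
    rw [Finset.sum_congr rfl this]
    simp
  calc ∫⁻ x, (f x : ℝ≥0∞) ∂μ
      = ∫⁻ x, ∑' n : ℕ, Set.indicator {x | n < f x} (fun _ => (1 : ℝ≥0∞)) x ∂μ :=
        lintegral_congr key
    _ = ∑' n : ℕ, ∫⁻ x, Set.indicator {x | n < f x} (fun _ => (1 : ℝ≥0∞)) x ∂μ :=
        lintegral_tsum fun n => (measurable_const.indicator (hms n)).aemeasurable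
    _ = ∑' n : ℕ, μ {x | n < f x} := tsum_congr fun n => lintegral_indicator_one (hms n)

lemma towerMeasure_apply (μX : Measure X) {R : X → ℕ} (hR : Measurable R)
    {E : Set (X × ℕ)} (hE : MeasurableSet E) :
    towerMeasure μX R E = (∫⁻ x, (R x : ℝ≥0∞) ∂μX)⁻¹
      * ∑' n : ℕ, μX ({x | (x, n) ∈ E} ∩ {x | n < R x}) := by
  unfold towerMeasure
  rw [Measure.smul_apply, Measure.sum_apply _ hE, smul_eq_mul]
  congr 1
  refine tsum_congr fun n => ?_
  rw [Measure.map_apply (measurable_prodMk_right (y := n)) hE,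
    Measure.restrict_apply' (measurableSet_natLt hR n)]
  rfl

/-- **Reduction of short returns from the truncated tower to the base.**
For every measurable section `A ⊆ Δ` and every integer `K ≥ 2`,
`∫_{Δ_m} 1_{π_{Δ_m}A} · 1_{⋃_{j=1}^{K−1} T_m^{-j}(π_{Δ_m}A)} dμ_{Δ_m}
  ≤ (∫ min(R, m+1) dμ_X)⁻¹ · ∫_X 1_{π_X(A)} · 1_{⋃_{j=1}^{K} g^{-j}(π_X(A))} dμ_X`. -/
theorem stmt13 (μX : Measure X) [IsProbabilityMeasure μX]
    (R : X → ℕ) (hRmeas : Measurable R) (hR1 : ∀ x, 1 ≤ R x)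
    (hRint : (∫⁻ x, (R x : ℝ≥0∞) ∂μX) < ⊤)
    (g : X → X) (hg : MeasurePreserving g μX μX)
    (m : ℕ)
    (A : Set (X × ℕ)) (hAsub : A ⊆ towerSet R) (hAmeas : MeasurableSet A)
    (hAsec : Set.InjOn Prod.fst A)
    (hfst : MeasurableSet (Prod.fst '' A))
    (hproj : MeasurableSet (truncProj m '' A))
    (K : ℕ) (hK : 2 ≤ K) :
    truncMeasure μX R m (truncSet R m ∩ (truncProj m '' A) ∩
        ⋃ j ∈ Icc 1 (K - 1), (inducedMap R g m)^[j] ⁻¹' (truncProj m '' A))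
      ≤ (∫⁻ x, ((min (R x) (m + 1) : ℕ) : ℝ≥0∞) ∂μX)⁻¹
        * μX ((Prod.fst '' A) ∩ ⋃ j ∈ Icc 1 K, g^[j] ⁻¹' (Prod.fst '' A)) := by
  classical
  have hgm : Measurable g := hg.measurable
  set I := ∫⁻ x, (R x : ℝ≥0∞) ∂μX with hIdef
  set M := ∫⁻ x, ((min (R x) (m + 1) : ℕ) : ℝ≥0∞) ∂μX with hMdef
  set P := truncProj m '' A with hPdef
  set B := Prod.fst '' A with hBdef
  set S := truncSet R m ∩ P ∩ ⋃ j ∈ Icc 1 (K - 1), (inducedMap R g m)^[j] ⁻¹' P with hSdef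
  -- basic measurability
  have htrunc : MeasurableSet (truncSet R m) := measurableSet_truncSet hRmeas m
  have hT : Measurable (inducedMap R g m) := measurable_inducedMap hRmeas hgm m
  have hU : MeasurableSet (⋃ j ∈ Icc 1 (K - 1), (inducedMap R g m)^[j] ⁻¹' P) :=
    MeasurableSet.biUnion (Set.to_countable _) fun j _ => (hT.iterate j) hproj
  have hS : MeasurableSet S := (htrunc.inter hproj).inter hU
  have hSsub : S ⊆ truncSet R m := fun z hz => hz.1.1
  -- constants
  have hI1 : 1 ≤ I := by
    rw [hIdef]
    calc (1 : ℝ≥0∞) = ∫⁻ _, 1 ∂μX := by simp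
      _ ≤ _ := lintegral_mono fun x => Nat.one_le_cast.mpr (hR1 x)
  have hI0 : I ≠ 0 := by intro h; rw [h] at hI1; simp at hI1
  have hIt : I ≠ ⊤ := hRint.ne
  have hMle : M ≤ I := lintegral_mono fun x => Nat.cast_le.mpr (min_le_left (R x) (m + 1))
  have hMt : M ≠ ⊤ := (lt_of_le_of_lt hMle hRint).ne
  -- section property of P
  have hsec : Set.InjOn Prod.fst P := by
    rintro _ ⟨a, ha, rfl⟩ _ ⟨b, hb, rfl⟩ h
    have : a = b := hAsec ha hb h
    rw [this]
  -- normalizer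
  have hc : towerMeasure μX R (truncSet R m) = I⁻¹ * M := by
    rw [towerMeasure_apply μX hRmeas htrunc, hMdef,
      lintegral_natCast_eq_tsum μX (hRmeas.min measurable_const)]
    congr 1
    refine tsum_congr fun n => ?_
    congr 1
    ext x
    simp only [truncSet, mem_inter_iff, mem_setOf_eq, lt_min_iff]
    omega
  -- LHS evaluation
  have hsliceMeas : ∀ n, MeasurableSet {x | (x, n) ∈ S} := fun n =>
    hS.preimage (measurable_prodMk_right (y := n))
  have hLHS : truncMeasure μX R m S = (I⁻¹ * M)⁻¹ * (I⁻¹ * ∑' n : ℕ, μX {x | (x, n) ∈ S}) := by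
    unfold truncMeasure
    rw [Measure.smul_apply, smul_eq_mul, hc, Measure.restrict_apply hS,
      Set.inter_eq_left.mpr hSsub, towerMeasure_apply μX hRmeas hS]
    congr 2
    refine tsum_congr fun n => ?_
    congr 1
    exact Set.inter_eq_left.mpr fun x hx => hx.1.1.1
  -- disjointness
  have hdisj : Pairwise (Function.onFun Disjoint fun n => {x | (x, n) ∈ S}) := by
    intro n n' hnn'
    rw [Function.onFun, Set.disjoint_left]
    intro x hx hx'
    have h1 : (x, n) ∈ P := hx.1.2
    have h2 : (x, n') ∈ P := hx'.1.2
    have := hsec h1 h2 rfl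
    exact hnn' (congrArg Prod.snd this)
  have hsum : ∑' n : ℕ, μX {x | (x, n) ∈ S} = μX (⋃ n : ℕ, {x | (x, n) ∈ S}) :=
    (measure_iUnion hdisj hsliceMeas).symm
  -- the key inclusion
  have hincl : (⋃ n : ℕ, {x | (x, n) ∈ S}) ⊆ B ∩ ⋃ j ∈ Icc 1 K, g^[j] ⁻¹' B := by
    intro x hx
    obtain ⟨n, hx⟩ := Set.mem_iUnion.mp hx
    obtain ⟨⟨htr, hxP⟩, hxU⟩ := hx
    obtain ⟨j, hj, hTj⟩ := Set.mem_iUnion₂.mp hxU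
    have hxB : x ∈ B := by
      obtain ⟨a, ha, hpa⟩ := hxP
      exact ⟨a, ha, congrArg Prod.fst hpa⟩
    refine ⟨hxB, ?_⟩
    obtain ⟨i, n', hij, hiter, hn'R, hn'm, hi0⟩ := inducedMap_iterate hR1 j x n htr.1 htr.2
    rw [Set.mem_preimage] at hTj
    rw [hiter] at hTj
    have hi1 : 1 ≤ i := by
      by_contra h0
      have hi : i = 0 := by omega
      rw [hi] at hTj
      simp only [Function.iterate_zero, id_eq] at hTj
      have heq := hsec hxP hTj rfl
      have hnn : n = n' := congrArg Prod.snd heq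
      have hnj := hi0 hi
      have hj1 : 1 ≤ j := hj.1
      omega
    refine Set.mem_biUnion (show i ∈ Icc 1 K from ⟨hi1, by
      have := hj.2; omega⟩) ?_
    obtain ⟨a, ha, hpa⟩ := hTj
    exact ⟨a, ha, congrArg Prod.fst hpa⟩
  -- put it together
  calc truncMeasure μX R m S
      = M⁻¹ * ∑' n : ℕ, μX {x | (x, n) ∈ S} := by
        rw [hLHS, ENNReal.mul_inv (Or.inl (ENNReal.inv_ne_zero.mpr hIt))
          (Or.inl (ENNReal.inv_ne_top.mpr hI0)), inv_inv]
        have hr : I * M⁻¹ * (I⁻¹ * ∑' n : ℕ, μX {x | (x, n) ∈ S})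
            = M⁻¹ * ((I * I⁻¹) * ∑' n : ℕ, μX {x | (x, n) ∈ S}) := by ring
        rw [hr, ENNReal.mul_inv_cancel hI0 hIt, one_mul]
    _ = M⁻¹ * μX (⋃ n : ℕ, {x | (x, n) ∈ S}) := by rw [hsum]
    _ ≤ M⁻¹ * μX (B ∩ ⋃ j ∈ Icc 1 K, g^[j] ⁻¹' B) :=
        mul_le_mul_right (measure_mono hincl) _
end
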